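/- arXiv:1107.1094 — 4 statements merged into one kernel-verified Lean document; each statement's English description precedes it below -/
import Mathlib

section
/- Suppose A_n ∈ SL(2,ℝ) satisfy (1/n) log ‖A_n‖ → 0 and (1/n) log ‖A_n ⋯ A_1‖ → γ for some γ > 0 as n → ∞. Then there exists a one-dimensional linear subspace V ⊂ ℝ² such that (1/n) log ‖A_n ⋯ A_1 v‖ → -γ for every v ∈ V \ {0}, and (1/n) log ‖A_n ⋯ A_1 v‖ → γ for every v ∈ ℝ² \ V. -/
open Filter

noncomputable section

/-- The operator (Euclidean) norm of a real 2×2 matrix. -/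
def opNorm (M : Matrix (Fin 2) (Fin 2) ℝ) : ℝ := ‖Matrix.toEuclideanCLM (𝕜 := ℝ) M‖

open Matrix
open scoped RealInnerProductSpace

abbrev E2 := EuclideanSpace ℝ (Fin 2)
abbrev T (M : Matrix (Fin 2) (Fin 2) ℝ) : E2 →L[ℝ] E2 := Matrix.toEuclideanCLM (𝕜 := ℝ) M

lemma inner_T_T (M : Matrix (Fin 2) (Fin 2) ℝ) (u v : E2) :
    ⟪T M u, T M v⟫ = ⟪u, T (Mᵀ * M) v⟫ := by
  have h1 : ⟪T M u, T M v⟫ = ⟪u, ContinuousLinearMap.adjoint (T M) (T M v)⟫ :=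
    (ContinuousLinearMap.adjoint_inner_right _ _ _).symm
  rw [h1, ← ContinuousLinearMap.star_eq_adjoint, ← map_star (Matrix.toEuclideanCLM (𝕜 := ℝ))]
  have : star M = Mᵀ := rfl
  rw [this]
  have hm := map_mul (Matrix.toEuclideanCLM (n := Fin 2) (𝕜 := ℝ)) Mᵀ M
  rw [show T (Mᵀ * M) = T Mᵀ * T M from hm]
  rfl

lemma T_eigen {N : Matrix (Fin 2) (Fin 2) ℝ} (hN : N.IsHermitian) (j : Fin 2) :
    T N (hN.eigenvectorBasis j) = hN.eigenvalues j • hN.eigenvectorBasis j := by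
  apply (WithLp.equiv 2 (Fin 2 → ℝ)).injective
  simpa using hN.mulVec_eigenvectorBasis j

lemma svd_aux (M : Matrix (Fin 2) (Fin 2) ℝ) (f0 f1 : E2) (m0 m1 : ℝ)
    (hm0 : 0 ≤ m0) (hprod : m0 * m1 = 1) (hle : m0 ≤ m1)
    (hn0 : ‖f0‖ = 1) (hn1 : ‖f1‖ = 1)
    (hpar : ∀ v : E2, ⟪v, f0⟫ ^ 2 + ⟪v, f1⟫ ^ 2 = ‖v‖ ^ 2)
    (hnorm : ∀ v : E2, ‖T M v‖ ^ 2 = ⟪v, f0⟫ ^ 2 * m0 + ⟪v, f1⟫ ^ 2 * m1) :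
    ‖f0‖ = 1 ∧ 1 ≤ opNorm M ∧
      (∀ v : E2, ⟪v, f0⟫ ^ 2 + ⟪v, f1⟫ ^ 2 = ‖v‖ ^ 2) ∧
      (∀ v : E2, ‖T M v‖ ^ 2
        = ⟪v, f0⟫ ^ 2 * ((opNorm M) ^ 2)⁻¹ + ⟪v, f1⟫ ^ 2 * (opNorm M) ^ 2) := by
  have hm0pos : 0 < m0 := by
    rcases hm0.lt_or_eq with h | h
    · exact h
    · exfalso; rw [← h] at hprod; simp at hprod
  have hm1pos : 0 < m1 := lt_of_lt_of_le hm0pos hle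
  have hm1ge1 : 1 ≤ m1 := by nlinarith
  have hf00 : ⟪f0, f0⟫ = 1 := by
    rw [real_inner_self_eq_norm_sq, hn0]; norm_num
  have hf01 : ⟪f0, f1⟫ = 0 := by
    have := hpar f0
    rw [hf00, hn0] at this
    nlinarith [sq_nonneg ⟪f0, f1⟫]
  have hf11 : ⟪f1, f1⟫ = 1 := by
    rw [real_inner_self_eq_norm_sq, hn1]; norm_num
  have hf10 : ⟪f1, f0⟫ = 0 := by rw [real_inner_comm]; exact hf01
  -- opNorm M ^ 2 = m1
  have hub : ∀ v : E2, ‖T M v‖ ≤ Real.sqrt m1 * ‖v‖ := by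
    intro v
    have h1 : ‖T M v‖ ^ 2 ≤ m1 * ‖v‖ ^ 2 := by
      rw [hnorm v, ← hpar v]
      nlinarith [sq_nonneg ⟪v, f0⟫, sq_nonneg ⟪v, f1⟫]
    have h2 : (Real.sqrt m1 * ‖v‖) ^ 2 = m1 * ‖v‖ ^ 2 := by
      rw [mul_pow, Real.sq_sqrt hm1pos.le]
    exact le_of_sq_le_sq (by rw [h2]; exact h1) (by positivity)
  have hople : opNorm M ≤ Real.sqrt m1 :=
    ContinuousLinearMap.opNorm_le_bound _ (Real.sqrt_nonneg _) hub
  have hopge : Real.sqrt m1 ≤ opNorm M := by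
    have h1 : ‖T M f1‖ ^ 2 = m1 := by
      rw [hnorm f1, hf10, hf11]; ring
    have h2 : ‖T M f1‖ ≤ opNorm M := by
      calc ‖T M f1‖ ≤ ‖Matrix.toEuclideanCLM (𝕜 := ℝ) M‖ * ‖f1‖ :=
            ContinuousLinearMap.le_opNorm _ _
        _ = opNorm M := by rw [hn1, opNorm, mul_one]
    have h3 : ‖T M f1‖ = Real.sqrt m1 := by
      rw [← h1]; exact (Real.sqrt_sq (norm_nonneg _)).symm
    rw [← h3]; exact h2
  have hop : opNorm M = Real.sqrt m1 := le_antisymm hople hopge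
  have hopsq : (opNorm M) ^ 2 = m1 := by rw [hop, Real.sq_sqrt hm1pos.le]
  have hop1 : 1 ≤ opNorm M := by
    rw [hop]
    exact (Real.one_le_sqrt).mpr hm1ge1
  have hm0eq : m0 = ((opNorm M) ^ 2)⁻¹ := by
    rw [hopsq]; field_simp; linarith [hprod]
  refine ⟨hn0, hop1, hpar, fun v => ?_⟩
  rw [hnorm v, hm0eq, hopsq]

lemma svd (M : Matrix (Fin 2) (Fin 2) ℝ) (h : M.det = 1) :
    ∃ e0 e1 : E2, ‖e0‖ = 1 ∧ 1 ≤ opNorm M ∧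
      (∀ v : E2, ⟪v, e0⟫ ^ 2 + ⟪v, e1⟫ ^ 2 = ‖v‖ ^ 2) ∧
      (∀ v : E2, ‖T M v‖ ^ 2
        = ⟪v, e0⟫ ^ 2 * ((opNorm M) ^ 2)⁻¹ + ⟪v, e1⟫ ^ 2 * (opNorm M) ^ 2) := by
  have hN : (Mᵀ * M).IsHermitian := by
    have := Matrix.isHermitian_conjTranspose_mul_self M
    simpa using this
  set N := Mᵀ * M with hNdef
  set b := hN.eigenvectorBasis with hbdef
  set μ := hN.eigenvalues with hμdef
  have key : ∀ (j : Fin 2) (v : E2), ⟪T M v, T M (b j)⟫ = μ j * ⟪v, b j⟫ := by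
    intro j v
    rw [inner_T_T, ← hNdef, T_eigen hN j, real_inner_smul_right]
  have hexp : ∀ w : E2, w = ⟪w, b 0⟫ • b 0 + ⟪w, b 1⟫ • b 1 := by
    intro w
    have h1 := b.sum_repr w
    rw [Fin.sum_univ_two] at h1
    have h2 : ∀ i, b.repr w i = ⟪w, b i⟫ := by
      intro i
      rw [OrthonormalBasis.repr_apply_apply, real_inner_comm]
    rw [h2 0, h2 1] at h1
    exact h1.symm
  have expand : ∀ u w : E2,
      ⟪T M u, T M w⟫ = ⟪w, b 0⟫ * (μ 0 * ⟪u, b 0⟫) + ⟪w, b 1⟫ * (μ 1 * ⟪u, b 1⟫) := by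
    intro u w
    conv_lhs => rw [hexp w]
    rw [map_add, _root_.map_smul, _root_.map_smul, inner_add_right, real_inner_smul_right,
      real_inner_smul_right, key, key]
  have hpar : ∀ v : E2, ⟪v, b 0⟫ ^ 2 + ⟪v, b 1⟫ ^ 2 = ‖v‖ ^ 2 := by
    intro v
    have h1 : ∀ u w : E2, ⟪u, w⟫ = ⟪w, b 0⟫ * ⟪u, b 0⟫ + ⟪w, b 1⟫ * ⟪u, b 1⟫ := by
      intro u w
      conv_lhs => rw [hexp w]
      rw [inner_add_right, real_inner_smul_right, real_inner_smul_right]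
    rw [← real_inner_self_eq_norm_sq, h1 v v]; ring
  have hnorm : ∀ v : E2, ‖T M v‖ ^ 2 = ⟪v, b 0⟫ ^ 2 * μ 0 + ⟪v, b 1⟫ ^ 2 * μ 1 := by
    intro v
    rw [← real_inner_self_eq_norm_sq, expand v v]; ring
  have hμnn : ∀ j, 0 ≤ μ j := by
    intro j
    have h1 := key j (b j)
    have h2 : ⟪b j, b j⟫ = 1 := by
      rw [real_inner_self_eq_norm_sq, b.orthonormal.1 j]; norm_num
    rw [h2, mul_one] at h1
    rw [← h1, real_inner_self_eq_norm_sq]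
    positivity
  have hμprod : μ 0 * μ 1 = 1 := by
    have h1 := hN.det_eq_prod_eigenvalues
    rw [Fin.prod_univ_two] at h1
    have h2 : N.det = 1 := by
      rw [hNdef, Matrix.det_mul, Matrix.det_transpose, h, one_mul]
    rw [h2] at h1
    exact_mod_cast h1.symm
  have hb0 : ‖b 0‖ = 1 := b.orthonormal.1 0
  have hb1 : ‖b 1‖ = 1 := b.orthonormal.1 1
  rcases le_total (μ 0) (μ 1) with hle | hle
  · exact ⟨b 0, b 1, svd_aux M (b 0) (b 1) (μ 0) (μ 1) (hμnn 0) hμprod hle hb0 hb1 hpar hnorm⟩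
  · refine ⟨b 1, b 0, svd_aux M (b 1) (b 0) (μ 1) (μ 0) (hμnn 1) (by linarith [hμprod]; ) hle hb1 hb0
      (fun v => by rw [← hpar v]; ring) (fun v => by rw [hnorm v]; ring)⟩

lemma sl2_one_le (M : Matrix (Fin 2) (Fin 2) ℝ) (h : M.det = 1) : 1 ≤ opNorm M :=
  (svd M h).choose_spec.choose_spec.2.1

lemma sl2_pos (M : Matrix (Fin 2) (Fin 2) ℝ) (h : M.det = 1) : 0 < opNorm M :=
  lt_of_lt_of_le one_pos (sl2_one_le M h)

lemma sl2_lower (M : Matrix (Fin 2) (Fin 2) ℝ) (h : M.det = 1) (v : E2) :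
    ‖v‖ ≤ opNorm M * ‖T M v‖ := by
  obtain ⟨e0, e1, _, hop, hpar, hnorm⟩ := svd M h
  have hop0 : 0 < opNorm M := lt_of_lt_of_le one_pos hop
  have hinv : (opNorm M) ^ 2 * ((opNorm M) ^ 2)⁻¹ = 1 := by
    field_simp
  have h1 : ‖v‖ ^ 2 ≤ (opNorm M * ‖T M v‖) ^ 2 := by
    rw [mul_pow, hnorm v, ← hpar v, mul_add]
    have e1' : opNorm M ^ 2 * (⟪v, e0⟫ ^ 2 * (opNorm M ^ 2)⁻¹) = ⟪v, e0⟫ ^ 2 := by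
      field_simp
    rw [e1']
    have hop2 : 1 ≤ opNorm M ^ 2 := by nlinarith
    have key : 0 ≤ ⟪v, e1⟫ ^ 2 * (opNorm M ^ 2 * opNorm M ^ 2 - 1) :=
      mul_nonneg (sq_nonneg _) (by nlinarith)
    nlinarith [key]
  exact le_of_sq_le_sq h1 (by positivity)

lemma sl2_T_pos (M : Matrix (Fin 2) (Fin 2) ℝ) (h : M.det = 1) {v : E2} (hv : v ≠ 0) :
    0 < ‖T M v‖ := by
  have h1 := sl2_lower M h v
  have h2 : 0 < ‖v‖ := norm_pos_iff.mpr hv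
  nlinarith [sl2_pos M h, norm_nonneg (T M v)]

lemma absorb₁ {a b C : ℝ} (hab : a < b) :
    ∀ᶠ n : ℕ in atTop, C * Real.exp (a * n) ≤ Real.exp (b * n) := by
  have h1 : Tendsto (fun n : ℕ => Real.exp ((b - a) * n)) atTop atTop := by
    apply Real.tendsto_exp_atTop.comp
    exact Tendsto.const_mul_atTop (by linarith) tendsto_natCast_atTop_atTop
  filter_upwards [h1.eventually_ge_atTop C] with n hn
  have h2 : C ≤ Real.exp ((b - a) * n) := hn
  have h3 : Real.exp ((b-a) * n) * Real.exp (a * n) = Real.exp (b * n) := by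
    rw [← Real.exp_add]; ring_nf
  nlinarith [Real.exp_pos (a * (n:ℝ)), Real.exp_pos (b * (n:ℝ))]

lemma absorb₂ {a b C : ℝ} (hab : a < b) (hC : 0 < C) :
    ∀ᶠ n : ℕ in atTop, Real.exp (a * n) ≤ C * Real.exp (b * n) := by
  filter_upwards [absorb₁ (C := C⁻¹) hab] with n hn
  calc Real.exp (a * n) = C * (C⁻¹ * Real.exp (a * n)) := by field_simp
    _ ≤ C * Real.exp (b * n) := by
        exact mul_le_mul_of_nonneg_left hn hC.le

lemma eventually_exp_bounds {g : ℕ → ℝ} {c : ℝ} (hg : ∀ n, 1 ≤ g n)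
    (h : Tendsto (fun n : ℕ => (1 / (n : ℝ)) * Real.log (g n)) atTop (nhds c))
    {ε : ℝ} (hε : 0 < ε) :
    ∀ᶠ n : ℕ in atTop, g n ≤ Real.exp ((c + ε) * n) ∧ Real.exp ((c - ε) * n) ≤ g n := by
  have h1 := Metric.tendsto_atTop.mp h ε hε
  obtain ⟨N, hN⟩ := h1
  rw [eventually_atTop]
  refine ⟨max N 1, fun n hn => ?_⟩
  have hn1 : 1 ≤ n := le_trans (le_max_right N 1) hn
  have hnN : N ≤ n := le_trans (le_max_left N 1) hn
  have hnpos : (0:ℝ) < n := by exact_mod_cast hn1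
  have h2 := hN n hnN
  rw [Real.dist_eq, abs_lt] at h2
  have hgpos : 0 < g n := lt_of_lt_of_le one_pos (hg n)
  have hlog1 : Real.log (g n) ≤ (c + ε) * n := by
    have := h2.2
    have h3 : (1 / (n:ℝ)) * Real.log (g n) < c + ε := by linarith
    calc Real.log (g n) = n * ((1/(n:ℝ)) * Real.log (g n)) := by field_simp
      _ ≤ n * (c + ε) := by apply mul_le_mul_of_nonneg_left h3.le hnpos.le
      _ = (c + ε) * n := by ring
  have hlog2 : (c - ε) * n ≤ Real.log (g n) := by
    have h3 : c - ε < (1 / (n:ℝ)) * Real.log (g n) := by linarith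
    calc (c - ε) * n = n * (c - ε) := by ring
      _ ≤ n * ((1/(n:ℝ)) * Real.log (g n)) := by
          apply mul_le_mul_of_nonneg_left h3.le hnpos.le
      _ = Real.log (g n) := by field_simp
  constructor
  · calc g n = Real.exp (Real.log (g n)) := (Real.exp_log hgpos).symm
      _ ≤ Real.exp ((c + ε) * n) := Real.exp_le_exp.mpr hlog1
  · calc Real.exp ((c - ε) * n) ≤ Real.exp (Real.log (g n)) := Real.exp_le_exp.mpr hlog2
      _ = g n := Real.exp_log hgpos

lemma tendsto_of_exp_bounds {f : ℕ → ℝ} {c : ℝ}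
    (hU : ∀ ε : ℝ, 0 < ε → ∀ᶠ n : ℕ in atTop, f n ≤ Real.exp ((c + ε) * n))
    (hL : ∀ ε : ℝ, 0 < ε → ∀ᶠ n : ℕ in atTop, Real.exp ((c - ε) * n) ≤ f n) :
    Tendsto (fun n : ℕ => (1 / (n : ℝ)) * Real.log (f n)) atTop (nhds c) := by
  rw [Metric.tendsto_atTop]
  intro ε hε
  have hε2 : 0 < ε / 2 := by linarith
  obtain ⟨N1, hN1⟩ := eventually_atTop.mp (hU (ε/2) hε2)
  obtain ⟨N2, hN2⟩ := eventually_atTop.mp (hL (ε/2) hε2)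
  refine ⟨max (max N1 N2) 1, fun n hn => ?_⟩
  have hn1 : 1 ≤ n := le_trans (le_max_right _ 1) hn
  have hnpos : (0:ℝ) < n := by exact_mod_cast hn1
  have h1 := hN1 n (le_trans (le_trans (le_max_left N1 N2) (le_max_left _ 1)) hn)
  have h2 := hN2 n (le_trans (le_trans (le_max_right N1 N2) (le_max_left _ 1)) hn)
  have hfpos : 0 < f n := lt_of_lt_of_le (Real.exp_pos _) h2
  have hlog1 : Real.log (f n) ≤ (c + ε/2) * n := by
    calc Real.log (f n) ≤ Real.log (Real.exp ((c + ε/2) * n)) := Real.log_le_log hfpos h1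
      _ = (c + ε/2) * n := Real.log_exp _
  have hlog2 : (c - ε/2) * n ≤ Real.log (f n) := by
    calc (c - ε/2) * n = Real.log (Real.exp ((c - ε/2) * n)) := (Real.log_exp _).symm
      _ ≤ Real.log (f n) := Real.log_le_log (Real.exp_pos _) h2
  rw [Real.dist_eq, abs_lt]
  constructor
  · have : c - ε/2 ≤ (1/(n:ℝ)) * Real.log (f n) := by
      calc c - ε/2 = (1/(n:ℝ)) * ((c - ε/2) * n) := by field_simp
        _ ≤ (1/(n:ℝ)) * Real.log (f n) := by
            apply mul_le_mul_of_nonneg_left hlog2 (by positivity)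
    linarith
  · have : (1/(n:ℝ)) * Real.log (f n) ≤ c + ε/2 := by
      calc (1/(n:ℝ)) * Real.log (f n) ≤ (1/(n:ℝ)) * ((c + ε/2) * n) := by
            apply mul_le_mul_of_nonneg_left hlog1 (by positivity)
        _ = c + ε/2 := by field_simp
    linarith


set_option maxHeartbeats 2000000 in
/-- **The Oseledec–Ruelle theorem for `SL(2,ℝ)` cocycles.** Suppose `A n ∈ SL(2,ℝ)` satisfy
`(1/n) log ‖A n‖ → 0` and `(1/n) log ‖A n ⋯ A 1‖ → γ > 0`, where `P n = A n ⋯ A 1` is the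
ordered product. Then there is a one-dimensional subspace `V ⊂ ℝ²` such that
`(1/n) log ‖P n v‖ → -γ` for every nonzero `v ∈ V` and `(1/n) log ‖P n v‖ → γ` for every
`v ∉ V`. -/
theorem oseledec_ruelle
    (A : ℕ → Matrix (Fin 2) (Fin 2) ℝ)
    (hdet : ∀ n, (A n).det = 1)
    (P : ℕ → Matrix (Fin 2) (Fin 2) ℝ)
    (hP0 : P 0 = 1)
    (hPsucc : ∀ n : ℕ, P (n + 1) = A (n + 1) * P n)
    (hA : Tendsto (fun n : ℕ => (1 / (n : ℝ)) * Real.log (opNorm (A n))) atTop (nhds 0))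
    (γ : ℝ) (hγ : 0 < γ)
    (hP : Tendsto (fun n : ℕ => (1 / (n : ℝ)) * Real.log (opNorm (P n))) atTop (nhds γ)) :
    ∃ V : Submodule ℝ (EuclideanSpace ℝ (Fin 2)), Module.finrank ℝ V = 1 ∧
      (∀ v ∈ V, v ≠ 0 →
        Tendsto (fun n : ℕ => (1 / (n : ℝ)) *
          Real.log ‖Matrix.toEuclideanCLM (𝕜 := ℝ) (P n) v‖) atTop (nhds (-γ))) ∧
      (∀ v : EuclideanSpace ℝ (Fin 2), v ∉ V →
        Tendsto (fun n : ℕ => (1 / (n : ℝ)) *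
          Real.log ‖Matrix.toEuclideanCLM (𝕜 := ℝ) (P n) v‖) atTop (nhds γ)) := by
  classical
  have hdP : ∀ n, (P n).det = 1 := by
    intro n
    induction n with
    | zero => rw [hP0]; simp
    | succ n ih => rw [hPsucc, Matrix.det_mul, hdet, ih, mul_one]
  choose e0 e1 he0 hop hpar hnorm using fun n => svd (P n) (hdP n)
  set Np : ℕ → ℝ := fun n => opNorm (P n) with hNpdef
  have hNppos : ∀ n, 0 < Np n := fun n => lt_of_lt_of_le one_pos (hop n)
  have hNapos : ∀ n, 0 < opNorm (A n) := fun n => sl2_pos _ (hdet n)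
  have hNa1 : ∀ n, 1 ≤ opNorm (A n) := fun n => sl2_one_le _ (hdet n)
  -- inner product facts
  have h00 : ∀ n, ⟪e0 n, e0 n⟫ = 1 := fun n => by
    rw [real_inner_self_eq_norm_sq, he0 n]; norm_num
  have h01 : ∀ n, ⟪e0 n, e1 n⟫ = 0 := fun n => by
    have h1 := hpar n (e0 n)
    rw [h00 n, he0 n] at h1
    nlinarith [sq_nonneg ⟪e0 n, e1 n⟫]
  have hstb : ∀ n, ‖T (P n) (e0 n)‖ ≤ (Np n)⁻¹ := by
    intro n
    have h1 := hnorm n (e0 n)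
    rw [h00 n, h01 n] at h1
    apply le_of_sq_le_sq _ (inv_nonneg.mpr (hNppos n).le)
    rw [h1, inv_pow]
    norm_num
    exact le_rfl
  have hcomp : ∀ n (x : E2), T (P (n+1)) x = T (A (n+1)) (T (P n) x) := by
    intro n x
    rw [hPsucc n, show T (A (n+1) * P n) = T (A (n+1)) * T (P n) from
      map_mul (Matrix.toEuclideanCLM (n := Fin 2) (𝕜 := ℝ)) _ _]
    rfl
  -- the sign-corrected sequence of most-contracted directions
  let w : ℕ → E2 := fun n =>
    Nat.rec (e0 0) (fun m wm => if ⟪e0 (m+1), wm⟫ < 0 then -e0 (m+1) else e0 (m+1)) n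
  have hwsucc : ∀ n, w (n+1) = if ⟪e0 (n+1), w n⟫ < 0 then -e0 (n+1) else e0 (n+1) :=
    fun n => rfl
  have hwsign : ∀ n, w n = e0 n ∨ w n = -e0 n := by
    intro n
    cases n with
    | zero => exact Or.inl rfl
    | succ m =>
      rw [hwsucc m]
      split_ifs
      · exact Or.inr rfl
      · exact Or.inl rfl
  have hwnorm : ∀ n, ‖w n‖ = 1 := by
    intro n
    rcases hwsign n with h | h <;> rw [h]
    · exact he0 n
    · rw [norm_neg]; exact he0 n
  have hwinner : ∀ n, 0 ≤ ⟪w (n+1), w n⟫ := by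
    intro n
    rw [hwsucc n]
    split_ifs with h
    · rw [inner_neg_left]; linarith
    · linarith [not_lt.mp h]
  have hwsq : ∀ n (v : E2), ⟪v, w n⟫^2 = ⟪v, e0 n⟫^2 := by
    intro n v
    rcases hwsign n with h | h <;> rw [h]
    rw [inner_neg_right]; ring
  have hwT : ∀ n, ‖T (P n) (w n)‖ ≤ (Np n)⁻¹ := by
    intro n
    rcases hwsign n with h | h <;> rw [h]
    · exact hstb n
    · rw [map_neg, norm_neg]; exact hstb n
  -- bound on consecutive differences
  set d : ℕ → E2 := fun n => w (n+1) - w n with hddef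
  have hdbound : ∀ n, ‖d n‖ ≤ 2 * opNorm (A (n+1)) / (Np n * Np (n+1)) := by
    intro n
    have hab : ⟪w (n+1), e0 n⟫^2 + ⟪w (n+1), e1 n⟫^2 = 1 := by
      rw [hpar n (w (n+1)), hwnorm (n+1)]; norm_num
    have h1 : ‖T (P n) (w (n+1))‖ ≤ opNorm (A (n+1)) * (Np (n+1))⁻¹ := by
      have h2 := sl2_lower (A (n+1)) (hdet (n+1)) (T (P n) (w (n+1)))
      rw [← hcomp n (w (n+1))] at h2
      calc ‖T (P n) (w (n+1))‖
          ≤ opNorm (A (n+1)) * ‖T (P (n+1)) (w (n+1))‖ := h2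
        _ ≤ opNorm (A (n+1)) * (Np (n+1))⁻¹ :=
            mul_le_mul_of_nonneg_left (hwT (n+1)) (hNapos _).le
    have h4 : ⟪w (n+1), e1 n⟫^2 * (Np n)^2 ≤ ‖T (P n) (w (n+1))‖^2 := by
      rw [hnorm n (w (n+1))]
      nlinarith [sq_nonneg ⟪w (n+1), e0 n⟫, sq_nonneg (Np n), hNppos n,
        inv_nonneg.mpr (sq_nonneg (Np n))]
    have h5 : |⟪w (n+1), e1 n⟫| * Np n ≤ opNorm (A (n+1)) * (Np (n+1))⁻¹ := by
      apply le_of_sq_le_sq _ (mul_nonneg (hNapos _).le (inv_nonneg.mpr (hNppos _).le))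
      rw [mul_pow, sq_abs]
      calc ⟪w (n+1), e1 n⟫^2 * Np n^2 ≤ ‖T (P n) (w (n+1))‖^2 := h4
        _ ≤ (opNorm (A (n+1)) * (Np (n+1))⁻¹)^2 := by
            apply pow_le_pow_left₀ (norm_nonneg _) h1
    have h5' : |⟪w (n+1), e1 n⟫| * (Np n * Np (n+1)) ≤ opNorm (A (n+1)) := by
      calc |⟪w (n+1), e1 n⟫| * (Np n * Np (n+1))
          = (|⟪w (n+1), e1 n⟫| * Np n) * Np (n+1) := by ring
        _ ≤ (opNorm (A (n+1)) * (Np (n+1))⁻¹) * Np (n+1) :=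
            mul_le_mul_of_nonneg_right h5 (hNppos (n+1)).le
        _ = opNorm (A (n+1)) := by rw [mul_assoc, inv_mul_cancel₀ (hNppos (n+1)).ne', mul_one]
    have h7 : ‖d n‖^2 = 2 - 2*⟪w (n+1), w n⟫ := by
      rw [hddef]
      simp only []
      rw [norm_sub_sq_real, hwnorm (n+1), hwnorm n]
      ring
    have h6sq : ⟪w (n+1), w n⟫^2 = ⟪w (n+1), e0 n⟫^2 := hwsq n (w (n+1))
    have h6le : ⟪w (n+1), w n⟫ ≤ 1 := by nlinarith [hwinner n, sq_nonneg ⟪w (n+1), e1 n⟫]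
    have h8 : ‖d n‖^2 ≤ (2*|⟪w (n+1), e1 n⟫|)^2 := by
      rw [h7]
      nlinarith [hwinner n, sq_abs ⟪w (n+1), e1 n⟫]
    have h9 : ‖d n‖ ≤ 2*|⟪w (n+1), e1 n⟫| := le_of_sq_le_sq h8 (by positivity)
    rw [le_div_iff₀ (mul_pos (hNppos n) (hNppos (n+1)))]
    nlinarith [mul_le_mul_of_nonneg_right h9 (mul_pos (hNppos n) (hNppos (n+1))).le, h5',
      abs_nonneg ⟪w (n+1), e1 n⟫]
  -- eventual exponential bounds from the hypotheses
  have hNpB : ∀ ε : ℝ, 0 < ε → ∀ᶠ n : ℕ in atTop,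
      Np n ≤ Real.exp ((γ + ε) * n) ∧ Real.exp ((γ - ε) * n) ≤ Np n :=
    fun ε hε => eventually_exp_bounds hop hP hε
  have hNaB : ∀ ε : ℝ, 0 < ε → ∀ᶠ n : ℕ in atTop,
      opNorm (A n) ≤ Real.exp ((0 + ε) * n) :=
    fun ε hε => (eventually_exp_bounds hNa1 hA hε).mono (fun n hn => hn.1)
  -- decay of the consecutive differences
  have hdexp : ∀ ε : ℝ, 0 < ε → ∀ᶠ n : ℕ in atTop,
      ‖d n‖ ≤ Real.exp ((-(2*γ) + ε) * n) := by
    intro ε hε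
    have hε4 : 0 < ε/4 := by linarith
    have hshiftA : ∀ᶠ n : ℕ in atTop,
        opNorm (A (n+1)) ≤ Real.exp ((0 + ε/4) * ((n:ℝ)+1)) := by
      obtain ⟨N, hN⟩ := eventually_atTop.mp (hNaB (ε/4) hε4)
      refine eventually_atTop.mpr ⟨N, fun n hn => ?_⟩
      have := hN (n+1) (by omega)
      convert this using 3
      push_cast; ring
    have hshiftP : ∀ᶠ n : ℕ in atTop,
        Real.exp ((γ - ε/4) * ((n:ℝ)+1)) ≤ Np (n+1) := by
      obtain ⟨N, hN⟩ := eventually_atTop.mp (hNpB (ε/4) hε4)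
      refine eventually_atTop.mpr ⟨N, fun n hn => ?_⟩
      have := (hN (n+1) (by omega)).2
      convert this using 3
      push_cast; ring
    have habs := absorb₁ (C := 2 * Real.exp (2*(ε/4) - γ))
      (a := -(2*γ) + 3*(ε/4)) (b := -(2*γ) + ε) (by linarith)
    filter_upwards [hshiftA, hshiftP, (hNpB (ε/4) hε4).mono (fun n hn => hn.2), habs]
      with n h1 h2 h3 h4
    calc ‖d n‖ ≤ 2 * opNorm (A (n+1)) / (Np n * Np (n+1)) := hdbound n
      _ ≤ 2 * Real.exp ((0 + ε/4) * ((n:ℝ)+1)) /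
          (Real.exp ((γ - ε/4) * n) * Real.exp ((γ - ε/4) * ((n:ℝ)+1))) := by
          apply div_le_div₀ (by positivity)
            (mul_le_mul_of_nonneg_left h1 (by norm_num))
            (mul_pos (Real.exp_pos _) (Real.exp_pos _))
            (mul_le_mul h3 h2 (Real.exp_pos _).le (hNppos n).le)
      _ = 2 * Real.exp (2*(ε/4) - γ) * Real.exp ((-(2*γ) + 3*(ε/4)) * n) := by
          rw [← Real.exp_add, mul_div_assoc, ← Real.exp_sub,
            show (0 + ε/4) * ((n:ℝ)+1) - ((γ - ε/4) * n + (γ - ε/4) * ((n:ℝ)+1))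
              = (2*(ε/4) - γ) + (-(2*γ) + 3*(ε/4)) * n by ring,
            Real.exp_add]
          ring
      _ ≤ Real.exp ((-(2*γ) + ε) * n) := h4
  -- summability
  have hDsum : Summable (fun n => ‖d n‖) := by
    obtain ⟨N, hN⟩ := eventually_atTop.mp (hdexp γ hγ)
    rw [← summable_nat_add_iff N]
    have hgeo : Summable (fun n : ℕ => Real.exp ((-(2*γ) + γ) * N) * Real.exp (-(2*γ) + γ) ^ n) :=
      (summable_geometric_of_lt_one (Real.exp_nonneg _)
        (Real.exp_lt_one_iff.mpr (by linarith))).mul_left _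
    apply Summable.of_nonneg_of_le (fun n => norm_nonneg _) (fun n => ?_) hgeo
    calc ‖d (n + N)‖ ≤ Real.exp ((-(2*γ) + γ) * (↑(n + N))) := hN (n + N) (by omega)
      _ = Real.exp ((-(2*γ) + γ) * N) * Real.exp (-(2*γ) + γ) ^ n := by
          rw [← Real.exp_nat_mul, ← Real.exp_add]
          congr 1
          push_cast; ring
  have hsum : Summable d := hDsum.of_norm
  set vinf : E2 := w 0 + ∑' n, d n with hvinfdef
  have hwtel : ∀ n, w n = w 0 + ∑ i ∈ Finset.range n, d i := by
    intro n
    have h1 : ∑ i ∈ Finset.range n, d i = w n - w 0 := by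
      rw [hddef]
      exact Finset.sum_range_sub w n
    rw [h1]; abel
  have hwlim : Tendsto w atTop (nhds vinf) := by
    have h1 := hsum.hasSum.tendsto_sum_nat
    have h2 : Tendsto (fun n => w 0 + ∑ i ∈ Finset.range n, d i) atTop (nhds vinf) :=
      tendsto_const_nhds.add h1
    exact h2.congr (fun n => (hwtel n).symm)
  have htail : ∀ n, vinf - w n = ∑' k, d (k + n) := by
    intro n
    have h1 := Summable.sum_add_tsum_nat_add n hsum
    rw [hwtel n, hvinfdef, ← h1]
    abel
  have htailB : ∀ ε : ℝ, 0 < ε → ∀ᶠ n : ℕ in atTop,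
      ‖vinf - w n‖ ≤ Real.exp ((-(2*γ) + ε) * n) := by
    intro ε hε
    set ε' := min (ε/2) γ with hε'def
    have hε'pos : 0 < ε' := lt_min (by linarith) hγ
    set a := -(2*γ) + ε' with hadef
    have ha : a < 0 := by
      have : ε' ≤ γ := min_le_right _ _
      rw [hadef]; linarith
    have hexpa : Real.exp a < 1 := Real.exp_lt_one_iff.mpr ha
    obtain ⟨N, hN⟩ := eventually_atTop.mp (hdexp ε' hε'pos)
    have habs := absorb₁ (C := (1 - Real.exp a)⁻¹) (a := a) (b := -(2*γ) + ε)
      (by rw [hadef]; have : ε' ≤ ε/2 := min_le_left _ _; linarith)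
    filter_upwards [eventually_ge_atTop N, habs] with n hn h4
    have key : ‖vinf - w n‖ ≤ (1 - Real.exp a)⁻¹ * Real.exp (a * n) := by
      rw [htail n]
      have hs1 : Summable (fun k => ‖d (k + n)‖) := (summable_nat_add_iff n).mpr hDsum
      have hs2 : Summable (fun k : ℕ => Real.exp (a * n) * Real.exp a ^ k) :=
        (summable_geometric_of_lt_one (Real.exp_nonneg _) hexpa).mul_left _
      calc ‖∑' k, d (k + n)‖ ≤ ∑' k, ‖d (k + n)‖ := norm_tsum_le_tsum_norm hs1
        _ ≤ ∑' k : ℕ, Real.exp (a * n) * Real.exp a ^ k := by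
            apply Summable.tsum_le_tsum _ hs1 hs2
            intro k
            calc ‖d (k + n)‖ ≤ Real.exp (a * ↑(k + n)) := hN (k + n) (by omega)
              _ = Real.exp (a * n) * Real.exp a ^ k := by
                  rw [← Real.exp_nat_mul, ← Real.exp_add]
                  congr 1
                  push_cast; ring
        _ = Real.exp (a * n) * (1 - Real.exp a)⁻¹ := by
            rw [tsum_mul_left, tsum_geometric_of_lt_one (Real.exp_nonneg _) hexpa]
        _ = (1 - Real.exp a)⁻¹ * Real.exp (a * n) := by ring
    exact key.trans h4
  have hvnorm : ‖vinf‖ = 1 := by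
    have h1 := hwlim.norm
    rw [show (fun n => ‖w n‖) = (fun _ : ℕ => (1:ℝ)) from funext hwnorm] at h1
    exact tendsto_nhds_unique h1 tendsto_const_nhds
  have hvne : vinf ≠ 0 := by
    intro h
    rw [h, norm_zero] at hvnorm
    norm_num at hvnorm
  -- upper and lower exponential bounds for the stable vector
  have hSU : ∀ ε : ℝ, 0 < ε → ∀ᶠ n : ℕ in atTop,
      ‖T (P n) vinf‖ ≤ Real.exp ((-γ + ε) * n) := by
    intro ε hε
    have hε4 : 0 < ε/4 := by linarith
    have habs := absorb₁ (C := (2:ℝ)) (a := -γ + ε/2) (b := -γ + ε) (by linarith)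
    filter_upwards [hNpB (ε/4) hε4, htailB (ε/4) hε4, habs] with n h1 h2 h3
    have hTv : ‖T (P n) vinf‖ ≤ (Np n)⁻¹ + Np n * ‖vinf - w n‖ := by
      have e : T (P n) vinf = T (P n) (w n) + T (P n) (vinf - w n) := by
        rw [← map_add]
        congr 1
        abel
      rw [e]
      calc ‖T (P n) (w n) + T (P n) (vinf - w n)‖
          ≤ ‖T (P n) (w n)‖ + ‖T (P n) (vinf - w n)‖ := norm_add_le _ _
        _ ≤ (Np n)⁻¹ + Np n * ‖vinf - w n‖ :=
            add_le_add (hwT n) ((T (P n)).le_opNorm _)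
    have hfirst : (Np n)⁻¹ ≤ Real.exp ((-γ + ε/2) * n) := by
      calc (Np n)⁻¹ ≤ (Real.exp ((γ - ε/4) * n))⁻¹ :=
            inv_anti₀ (Real.exp_pos _) h1.2
        _ = Real.exp ((-γ + ε/4) * n) := by rw [← Real.exp_neg]; congr 1; ring
        _ ≤ Real.exp ((-γ + ε/2) * n) := by
            apply Real.exp_le_exp.mpr
            apply mul_le_mul_of_nonneg_right (by linarith) (Nat.cast_nonneg n)
    have hsecond : Np n * ‖vinf - w n‖ ≤ Real.exp ((-γ + ε/2) * n) := by
      calc Np n * ‖vinf - w n‖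
          ≤ Real.exp ((γ + ε/4) * n) * Real.exp ((-(2*γ) + ε/4) * n) :=
            mul_le_mul h1.1 h2 (norm_nonneg _) (Real.exp_pos _).le
        _ = Real.exp ((-γ + ε/2) * n) := by rw [← Real.exp_add]; congr 1; ring
    calc ‖T (P n) vinf‖ ≤ (Np n)⁻¹ + Np n * ‖vinf - w n‖ := hTv
      _ ≤ 2 * Real.exp ((-γ + ε/2) * n) := by linarith
      _ ≤ Real.exp ((-γ + ε) * n) := h3
  have hSL : ∀ ε : ℝ, 0 < ε → ∀ᶠ n : ℕ in atTop,
      Real.exp ((-γ - ε) * n) ≤ ‖T (P n) vinf‖ := by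
    intro ε hε
    filter_upwards [hNpB ε hε] with n h1
    have h2 := sl2_lower (P n) (hdP n) vinf
    rw [hvnorm] at h2
    have h3 : Np n ≤ Real.exp ((γ + ε) * n) := h1.1
    have h4 : Real.exp ((-γ - ε) * n) * Real.exp ((γ + ε) * n) = 1 := by
      rw [← Real.exp_add, show (-γ - ε) * n + (γ + ε) * n = 0 by ring, Real.exp_zero]
    nlinarith [hNppos n, Real.exp_pos ((-γ - ε) * n), norm_nonneg (T (P n) vinf),
      mul_le_mul_of_nonneg_left h3 (Real.exp_pos ((-γ - ε) * n)).le]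
  have hstab : Tendsto (fun n : ℕ => (1/(n:ℝ)) * Real.log ‖T (P n) vinf‖)
      atTop (nhds (-γ)) :=
    tendsto_of_exp_bounds (c := -γ) hSU hSL
  refine ⟨Submodule.span ℝ {vinf}, finrank_span_singleton hvne, ?_, ?_⟩
  · -- stable subspace
    intro v hvV hv0
    obtain ⟨t, ht⟩ := Submodule.mem_span_singleton.mp hvV
    have ht0 : t ≠ 0 := by
      rintro rfl
      rw [zero_smul] at ht
      exact hv0 ht.symm
    have heq : ∀ n, ‖T (P n) v‖ = |t| * ‖T (P n) vinf‖ := by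
      intro n
      rw [← ht, _root_.map_smul, norm_smul, Real.norm_eq_abs]
    have h1 : Tendsto (fun n : ℕ => (1/(n:ℝ)) * Real.log |t|) atTop (nhds 0) := by
      apply (tendsto_const_div_atTop_nhds_zero_nat (Real.log |t|)).congr
      intro n
      ring
    have h2 := h1.add hstab
    rw [zero_add] at h2
    apply h2.congr
    intro n
    rw [heq n, Real.log_mul (abs_ne_zero.mpr ht0) (ne_of_gt (sl2_T_pos _ (hdP n) hvne))]
    ring
  · -- unstable complement
    intro v hv
    have hv0 : v ≠ 0 := fun h => hv (h ▸ Submodule.zero_mem _)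
    set t : ℝ := ⟪v, vinf⟫ with htdef
    have hu2 : ‖v - t • vinf‖^2 = ‖v‖^2 - t^2 := by
      rw [norm_sub_sq_real, real_inner_smul_right, norm_smul, hvnorm, Real.norm_eq_abs,
        mul_one, sq_abs, ← htdef]
      ring
    have hune : v - t • vinf ≠ 0 := by
      intro h
      apply hv
      rw [sub_eq_zero] at h
      exact h ▸ Submodule.mem_span_singleton.mpr ⟨t, rfl⟩
    have hc2 : 0 < ‖v‖^2 - t^2 := by
      rw [← hu2]
      exact pow_pos (norm_pos_iff.mpr hune) 2
    have hinlim : Tendsto (fun n => ⟪v, w n⟫) atTop (nhds t) :=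
      tendsto_const_nhds.inner hwlim
    have hsqlim : Tendsto (fun n => ⟪v, w n⟫^2) atTop (nhds (t^2)) := hinlim.pow 2
    have hb2 : ∀ᶠ n in atTop, (‖v‖^2 - t^2)/2 ≤ ⟪v, e1 n⟫^2 := by
      obtain ⟨N, hN⟩ := Metric.tendsto_atTop.mp hsqlim ((‖v‖^2 - t^2)/2) (by linarith)
      refine eventually_atTop.mpr ⟨N, fun n hn => ?_⟩
      have h2 := hN n hn
      rw [Real.dist_eq, abs_lt] at h2
      have h3 := hpar n v
      have h4 := hwsq n v
      nlinarith [h2.1, h2.2]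
    have hUU : ∀ ε : ℝ, 0 < ε → ∀ᶠ n : ℕ in atTop,
        ‖T (P n) v‖ ≤ Real.exp ((γ + ε) * n) := by
      intro ε hε
      have hvpos : 0 < ‖v‖ := norm_pos_iff.mpr hv0
      have habs := absorb₁ (C := ‖v‖) (a := γ + ε/2) (b := γ + ε) (by linarith)
      filter_upwards [hNpB (ε/2) (by linarith), habs] with n h1 h3
      calc ‖T (P n) v‖ ≤ Np n * ‖v‖ := (T (P n)).le_opNorm v
        _ ≤ Real.exp ((γ + ε/2) * n) * ‖v‖ := mul_le_mul_of_nonneg_right h1.1 hvpos.le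
        _ = ‖v‖ * Real.exp ((γ + ε/2) * n) := by ring
        _ ≤ Real.exp ((γ + ε) * n) := h3
    have hUL : ∀ ε : ℝ, 0 < ε → ∀ᶠ n : ℕ in atTop,
        Real.exp ((γ - ε) * n) ≤ ‖T (P n) v‖ := by
      intro ε hε
      set c3 : ℝ := Real.sqrt ((‖v‖^2 - t^2)/2) with hc3def
      have hc3 : 0 < c3 := Real.sqrt_pos.mpr (by linarith)
      have habs := absorb₂ (a := γ - ε) (b := γ - ε/2) (by linarith) hc3
      filter_upwards [hb2, hNpB (ε/2) (by linarith), habs] with n h1 h2 h3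
      have h4 : (c3 * Np n)^2 ≤ ‖T (P n) v‖^2 := by
        rw [hnorm n v, mul_pow, hc3def,
          Real.sq_sqrt (by linarith : (0:ℝ) ≤ (‖v‖^2 - t^2)/2)]
        nlinarith [mul_le_mul_of_nonneg_right h1 (sq_nonneg (Np n)),
          mul_nonneg (sq_nonneg ⟪v, e0 n⟫) (inv_nonneg.mpr (sq_nonneg (Np n)))]
      have h5 : c3 * Np n ≤ ‖T (P n) v‖ := le_of_sq_le_sq h4 (norm_nonneg _)
      calc Real.exp ((γ - ε) * n) ≤ c3 * Real.exp ((γ - ε/2) * n) := h3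
        _ ≤ c3 * Np n := mul_le_mul_of_nonneg_left h2.2 hc3.le
        _ ≤ ‖T (P n) v‖ := h5
    exact tendsto_of_exp_bounds hUU hUL
end
end

section
/- Let T be a measure-preserving transformation of a probability space (Ω, μ), and let f ∈ L¹(Ω, μ) be such that for μ-almost every ω, the Birkhoff sums ∑_{m=0}^{n-1} f(T^m ω) tend to +∞ as n → ∞. Then ∫ f dμ > 0. -/
open MeasureTheory Filter

section BirkhoffPosAux

open Function Set
open scoped ENNReal

set_option linter.unusedSectionVars false

variable {Ω : Type*} [MeasurableSpace Ω]

private lemma min_add_le'' {a x y : ℝ} (hx : 0 ≤ x) (hy : 0 ≤ y) :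
    min a (x + y) ≤ x + min a y := by
  rcases le_total a y with h | h
  · rw [min_eq_left h]
    have := min_le_left a (x + y); linarith [min_le_left a (x+y)]
  · rw [min_eq_right h]; exact min_le_right _ _

private lemma key_comb' {Ω : Type*} (T : Ω → Ω) (f : Ω → ℝ) (B : Set Ω) (δ : ℝ)
    (hB : ∀ x ∈ B, ∀ i : ℕ, δ ≤ birkhoffSum T f (i + 1) x) :
    ∀ d : ℕ, ∀ x ∈ B,
      δ * birkhoffSum T (B.indicator fun _ => (1:ℝ)) d x ≤ birkhoffSum T f d x := by
  intro d
  induction d using Nat.strong_induction_on with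
  | _ d IH =>
    intro x hx
    rcases Nat.eq_zero_or_pos d with rfl | hd
    · simp
    by_cases hvis : ∃ i, (1 ≤ i ∧ i < d) ∧ T^[i] x ∈ B
    · classical
      set i₀ := Nat.find hvis with hi₀
      obtain ⟨⟨hi1, hid⟩, hiB⟩ := Nat.find_spec hvis
      have hmin : ∀ j, j < i₀ → ¬((1 ≤ j ∧ j < d) ∧ T^[j] x ∈ B) :=
        fun j hj => Nat.find_min hvis hj
      have hV1 : birkhoffSum T (B.indicator fun _ => (1:ℝ)) i₀ x = 1 := by
        rw [birkhoffSum, Finset.sum_eq_single_of_mem 0 (Finset.mem_range.2 hi1)]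
        · simp [hx]
        · intro j hj hj0
          have hjlt : j < i₀ := Finset.mem_range.1 hj
          have hnB : T^[j] x ∉ B := fun hmem =>
            hmin j hjlt ⟨⟨Nat.one_le_iff_ne_zero.2 hj0, lt_trans hjlt hid⟩, hmem⟩
          simp [hnB]
      have hIH := IH (d - i₀) (by omega) (T^[i₀] x) hiB
      have hδi : δ ≤ birkhoffSum T f i₀ x := by
        have := hB x hx (i₀ - 1)
        rwa [Nat.sub_add_cancel hi1] at this
      have hsplitV : birkhoffSum T (B.indicator fun _ => (1:ℝ)) d x
          = birkhoffSum T (B.indicator fun _ => (1:ℝ)) i₀ x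
            + birkhoffSum T (B.indicator fun _ => (1:ℝ)) (d - i₀) (T^[i₀] x) := by
        rw [← birkhoffSum_add]; congr 1; omega
      have hsplitS : birkhoffSum T f d x
          = birkhoffSum T f i₀ x + birkhoffSum T f (d - i₀) (T^[i₀] x) := by
        rw [← birkhoffSum_add]; congr 1; omega
      rw [hsplitV, hsplitS, hV1, mul_add, mul_one]
      linarith
    · have hV1 : birkhoffSum T (B.indicator fun _ => (1:ℝ)) d x = 1 := by
        rw [birkhoffSum, Finset.sum_eq_single_of_mem 0 (Finset.mem_range.2 hd)]
        · simp [hx]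
        · intro j hj hj0
          have hjlt : j < d := Finset.mem_range.1 hj
          have hnB : T^[j] x ∉ B := fun hmem =>
            hvis ⟨j, ⟨Nat.one_le_iff_ne_zero.2 hj0, hjlt⟩, hmem⟩
          simp [hnB]
      rw [hV1, mul_one]
      have := hB x hx (d - 1)
      rwa [Nat.sub_add_cancel hd] at this

private lemma main_pointwise' {Ω : Type*} (T : Ω → Ω) (f : Ω → ℝ) (B : Set Ω) {δ : ℝ}
    (hδ : 0 ≤ δ)
    (hB : ∀ x ∈ B, ∀ i : ℕ, δ ≤ birkhoffSum T f (i + 1) x)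
    (ω : Ω) {M : ℝ} (hM0 : 0 ≤ M)
    (hMb : ∀ m : ℕ, -M ≤ birkhoffSum T f (m + 1) ω) (n : ℕ) :
    δ * birkhoffSum T (B.indicator fun _ => (1:ℝ)) n ω
      ≤ min (δ * n) (max 0 (birkhoffSum T f n ω) + M) := by
  have hVnonneg : ∀ (m : ℕ) (x : Ω), 0 ≤ birkhoffSum T (B.indicator fun _ => (1:ℝ)) m x := by
    intro m x
    refine Finset.sum_nonneg fun k _ => ?_
    by_cases h : T^[k] x ∈ B <;> simp [h]
  refine le_min ?_ ?_
  · have hVn : birkhoffSum T (B.indicator fun _ => (1:ℝ)) n ω ≤ n := by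
      rw [birkhoffSum]
      calc ∑ k ∈ Finset.range n, (B.indicator fun _ => (1:ℝ)) (T^[k] ω)
          ≤ ∑ _k ∈ Finset.range n, (1:ℝ) := by
            refine Finset.sum_le_sum fun k _ => ?_
            by_cases h : T^[k] ω ∈ B <;> simp [h]
        _ = n := by simp
    exact mul_le_mul_of_nonneg_left hVn hδ
  · by_cases hvis : ∃ k, k < n ∧ T^[k] ω ∈ B
    · classical
      set k₀ := Nat.find hvis with hk₀def
      obtain ⟨hk₀n, hk₀B⟩ := Nat.find_spec hvis
      have hV0 : birkhoffSum T (B.indicator fun _ => (1:ℝ)) k₀ ω = 0 := by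
        rw [birkhoffSum]
        refine Finset.sum_eq_zero fun j hj => ?_
        have hjlt : j < k₀ := Finset.mem_range.1 hj
        have hnB : T^[j] ω ∉ B := fun hmem =>
          Nat.find_min hvis hjlt ⟨lt_trans hjlt hk₀n, hmem⟩
        simp [hnB]
      have hsplitV : birkhoffSum T (B.indicator fun _ => (1:ℝ)) n ω
          = birkhoffSum T (B.indicator fun _ => (1:ℝ)) k₀ ω
            + birkhoffSum T (B.indicator fun _ => (1:ℝ)) (n - k₀) (T^[k₀] ω) := by
        rw [← birkhoffSum_add]; congr 1; omega
      have hsplitS : birkhoffSum T f n ω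
          = birkhoffSum T f k₀ ω + birkhoffSum T f (n - k₀) (T^[k₀] ω) := by
        rw [← birkhoffSum_add]; congr 1; omega
      have hkey := key_comb' T f B δ hB (n - k₀) (T^[k₀] ω) hk₀B
      have hSk : -M ≤ birkhoffSum T f k₀ ω := by
        rcases Nat.eq_zero_or_pos k₀ with h0 | hpos
        · rw [h0]; simp; linarith
        · have := hMb (k₀ - 1)
          rwa [Nat.sub_add_cancel hpos] at this
      have hmax : birkhoffSum T f n ω ≤ max 0 (birkhoffSum T f n ω) := le_max_right _ _
      rw [hsplitV, hV0, zero_add]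
      linarith
    · have hV0 : birkhoffSum T (B.indicator fun _ => (1:ℝ)) n ω = 0 := by
        rw [birkhoffSum]
        refine Finset.sum_eq_zero fun j hj => ?_
        have hnB : T^[j] ω ∉ B := fun hmem => hvis ⟨j, Finset.mem_range.1 hj, hmem⟩
        simp [hnB]
      rw [hV0, mul_zero]
      have := le_max_left 0 (birkhoffSum T f n ω)
      linarith

private lemma integral_birkhoffSum'' {μ : Measure Ω} {T : Ω → Ω} (hT : MeasurePreserving T μ μ)
    {g : Ω → ℝ} (hg : Integrable g μ) (n : ℕ) :
    ∫ ω, birkhoffSum T g n ω ∂μ = n * ∫ ω, g ω ∂μ := by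
  have hcomp : ∀ k : ℕ, Integrable (fun ω => g (T^[k] ω)) μ := fun k =>
    memLp_one_iff_integrable.1
      ((memLp_one_iff_integrable.2 hg).comp_measurePreserving (hT.iterate k))
  have hint : ∀ k : ℕ, ∫ ω, g (T^[k] ω) ∂μ = ∫ ω, g ω ∂μ := by
    intro k
    conv_rhs => rw [← (hT.iterate k).map_eq]
    rw [integral_map (hT.iterate k).aemeasurable]
    rw [(hT.iterate k).map_eq]
    exact hg.aestronglyMeasurable
  simp only [birkhoffSum]
  rw [integral_finset_sum _ fun k _ => hcomp k]
  simp [hint, Finset.sum_const]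

private lemma integrable_comp_iterate' {μ : Measure Ω} {T : Ω → Ω}
    (hT : MeasurePreserving T μ μ) {g : Ω → ℝ} (hg : Integrable g μ) (n : ℕ) :
    Integrable (fun ω => birkhoffSum T g n ω) μ := by
  have hcomp : ∀ k : ℕ, Integrable (fun ω => g (T^[k] ω)) μ := fun k =>
    memLp_one_iff_integrable.1
      ((memLp_one_iff_integrable.2 hg).comp_measurePreserving (hT.iterate k))
  simpa [birkhoffSum] using integrable_finset_sum (Finset.range n) fun k _ => hcomp k

private lemma hits_aux' (T : Ω → Ω) (f : Ω → ℝ) (ω : Ω)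
    (h : Tendsto (fun n => birkhoffSum T f n ω) atTop atTop) :
    ∃ k j : ℕ, ∀ i : ℕ, 1 / ((j : ℝ) + 1) ≤ birkhoffSum T f (i + 1) (T^[k] ω) := by
  set S : ℕ → ℝ := fun n => birkhoffSum T f n ω with hSdef
  obtain ⟨N, hN⟩ := eventually_atTop.1 (h.eventually (eventually_ge_atTop (1:ℝ)))
  have hR : (Finset.range (N + 1)).Nonempty := ⟨0, by simp⟩
  set c := (Finset.range (N + 1)).inf' hR S with hc
  obtain ⟨k₁, hk₁mem, hk₁eq⟩ := Finset.exists_mem_eq_inf' hR S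
  have hKne : ((Finset.range (N + 1)).filter fun j => S j = c).Nonempty :=
    ⟨k₁, Finset.mem_filter.2 ⟨hk₁mem, hk₁eq.symm⟩⟩
  set K := ((Finset.range (N + 1)).filter fun j => S j = c).max' hKne with hK
  have hKmem := ((Finset.range (N + 1)).filter fun j => S j = c).max'_mem hKne
  have hKc : S K = c := (Finset.mem_filter.1 hKmem).2
  have hKle : ∀ j ∈ (Finset.range (N + 1)).filter fun j => S j = c, j ≤ K :=
    fun j hj => Finset.le_max' _ j hj
  have hc0 : c ≤ 0 := by
    have h0 : c ≤ S 0 := Finset.inf'_le S (by simp)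
    simpa [hSdef, birkhoffSum_zero] using h0
  -- the values after K
  set g : ℕ → ℝ := fun i => birkhoffSum T f (i + 1) (T^[K] ω) with hg
  have hgS : ∀ i : ℕ, g i = S (K + (i + 1)) - S K := by
    intro i
    have := birkhoffSum_add T f K (i + 1) ω
    simp only [hSdef, hg]
    linarith [this]
  have hgpos : ∀ i : ℕ, 0 < g i := by
    intro i
    rw [hgS i, hKc]
    rcases le_or_gt (K + (i + 1)) N with hle | hlt
    · have hmem : K + (i + 1) ∈ Finset.range (N + 1) := Finset.mem_range.2 (by omega)
      have hge : c ≤ S (K + (i + 1)) := Finset.inf'_le S hmem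
      rcases lt_or_eq_of_le hge with hlt' | heq
      · linarith
      · exfalso
        have : K + (i + 1) ≤ K := hKle _ (Finset.mem_filter.2 ⟨hmem, heq.symm⟩)
        omega
    · have := hN (K + (i + 1)) (by omega)
      linarith
  have hgbig : ∀ i : ℕ, N ≤ i → 1 ≤ g i := by
    intro i hi
    rw [hgS i, hKc]
    have := hN (K + (i + 1)) (by omega)
    linarith
  have hR2 : (Finset.range (N + 1)).Nonempty := ⟨0, by simp⟩
  set ε := min 1 ((Finset.range (N + 1)).inf' hR2 g) with hε
  have hεpos : 0 < ε := by
    refine lt_min one_pos ?_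
    rw [Finset.lt_inf'_iff]
    exact fun i _ => hgpos i
  have hεle : ∀ i : ℕ, ε ≤ g i := by
    intro i
    rcases le_or_gt i N with hle | hlt
    · exact le_trans (min_le_right _ _) (Finset.inf'_le g (Finset.mem_range.2 (by omega)))
    · exact le_trans (min_le_left _ _) (hgbig i (by omega))
  obtain ⟨j, hj⟩ := exists_nat_one_div_lt hεpos
  exact ⟨K, j, fun i => le_trans (le_of_lt hj) (hεle i)⟩

private lemma measurable_birkhoffSum' {T : Ω → Ω} (hTm : Measurable T)
    {f : Ω → ℝ} (hfm : Measurable f) (n : ℕ) :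
    Measurable fun ω => birkhoffSum T f n ω := by
  simp only [birkhoffSum]
  exact Finset.measurable_sum _ fun k _ => hfm.comp (hTm.iterate k)

private lemma exists_pos_set' (μ : Measure Ω) [IsProbabilityMeasure μ] {T : Ω → Ω}
    (hT : MeasurePreserving T μ μ) {f : Ω → ℝ} (hfm : Measurable f)
    (hdiv : ∀ᵐ ω ∂μ, Tendsto (fun n => birkhoffSum T f n ω) atTop atTop) :
    ∃ j : ℕ, 0 < μ {ω | ∀ i : ℕ, 1 / ((j : ℝ) + 1) ≤ birkhoffSum T f (i + 1) ω} := by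
  set A : ℕ → Set Ω := fun j => {ω | ∀ i : ℕ, 1 / ((j : ℝ) + 1) ≤ birkhoffSum T f (i + 1) ω}
    with hA
  have hAmeas : ∀ j, MeasurableSet (A j) := by
    intro j
    have : A j = ⋂ i : ℕ, {ω | 1 / ((j : ℝ) + 1) ≤ birkhoffSum T f (i + 1) ω} := by
      ext ω; simp [hA, Set.mem_iInter]
    rw [this]
    exact MeasurableSet.iInter fun i =>
      measurableSet_le measurable_const (measurable_birkhoffSum' hT.measurable hfm (i + 1))
  by_contra hcon
  push_neg at hcon
  have hAnull : ∀ j, μ (A j) = 0 := fun j => le_antisymm (hcon j) zero_le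
  set U : Set Ω := ⋃ k : ℕ, ⋃ j : ℕ, T^[k] ⁻¹' A j with hU
  have hUnull : μ U = 0 := by
    refine measure_iUnion_null fun k => measure_iUnion_null fun j => ?_
    rw [(hT.iterate k).measure_preimage (hAmeas j).nullMeasurableSet]
    exact hAnull j
  have hae : ∀ᵐ ω ∂μ, ω ∈ U := by
    refine hdiv.mono fun ω hω => ?_
    obtain ⟨k, j, hkj⟩ := hits_aux' T f ω hω
    exact Set.mem_iUnion.2 ⟨k, Set.mem_iUnion.2 ⟨j, hkj⟩⟩
  have hcompl : μ Uᶜ = 0 := by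
    have := ae_iff.1 hae
    simpa [Set.compl_def] using this
  have h1 : (1 : ℝ≥0∞) ≤ μ U + μ Uᶜ := by
    rw [← measure_univ (μ := μ)]
    exact (measure_mono (by simp [Set.union_compl_self])).trans (measure_union_le U Uᶜ)
  rw [hUnull, hcompl] at h1
  simp at h1

private lemma lim_aux' {μ : Measure Ω} [IsProbabilityMeasure μ] {M : Ω → ℝ}
    (hM : Measurable M) (hM0 : ∀ ω, 0 ≤ M ω) {c : ℝ} (hc : 0 < c) :
    Tendsto (fun n : ℕ => (∫ ω, min (c * n) (M ω) ∂μ) / n) atTop (nhds 0) := by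
  have heq : ∀ n : ℕ, (∫ ω, min (c * n) (M ω) ∂μ) / n
      = ∫ ω, min (c * n) (M ω) / n ∂μ := fun n => (integral_div _ _).symm
  simp only [heq]
  have htend : Tendsto (fun n : ℕ => ∫ ω, min (c * n) (M ω) / n ∂μ) atTop
      (nhds (∫ _ω, (0:ℝ) ∂μ)) := by
    refine tendsto_integral_of_dominated_convergence (fun _ => c) ?_ (integrable_const c) ?_ ?_
    · intro n
      exact ((measurable_const.min hM).div_const _).aestronglyMeasurable
    · intro n
      refine Eventually.of_forall fun ω => ?_
      rcases Nat.eq_zero_or_pos n with rfl | hn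
      · simp [hc.le]
      · have hn' : (0:ℝ) < n := by exact_mod_cast hn
        have h1 : 0 ≤ min (c * n) (M ω) := le_min (by positivity) (hM0 ω)
        have h2 : min (c * n) (M ω) ≤ c * n := min_le_left _ _
        rw [Real.norm_eq_abs, abs_of_nonneg (by positivity)]
        rw [div_le_iff₀ hn']
        exact h2
    · refine Eventually.of_forall fun ω => ?_
      refine squeeze_zero (g := fun n : ℕ => M ω / n) (fun n => ?_) (fun n => ?_) ?_
      · rcases Nat.eq_zero_or_pos n with rfl | hn
        · simp
        · have hn' : (0:ℝ) < n := by exact_mod_cast hn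
          have h1 : 0 ≤ min (c * n) (M ω) := le_min (by positivity) (hM0 ω)
          positivity
      · rcases Nat.eq_zero_or_pos n with rfl | hn
        · simp [hM0 ω]
        · have hn' : (0:ℝ) < n := by exact_mod_cast hn
          apply div_le_div_of_nonneg_right (min_le_right _ _) hn'.le

      · exact tendsto_const_div_atTop_nhds_zero_nat (M ω)
  simpa using htend

private lemma trunc_aux' {μ : Measure Ω} [IsProbabilityMeasure μ] {g : Ω → ℝ}
    (hgm : Measurable g) (hg : Integrable g μ) (hg0 : ∀ ω, 0 ≤ g ω) :
    Tendsto (fun c : ℕ => ∫ ω, max 0 (g ω - c) ∂μ) atTop (nhds 0) := by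
  have htend : Tendsto (fun c : ℕ => ∫ ω, max 0 (g ω - c) ∂μ) atTop
      (nhds (∫ _ω, (0:ℝ) ∂μ)) := by
    refine tendsto_integral_of_dominated_convergence g ?_ hg ?_ ?_
    · intro c
      exact (measurable_const.max (hgm.sub measurable_const)).aestronglyMeasurable
    · intro c
      refine Eventually.of_forall fun ω => ?_
      rw [Real.norm_eq_abs, abs_of_nonneg (le_max_left _ _)]
      have hc : (0:ℝ) ≤ c := Nat.cast_nonneg c
      exact max_le (hg0 ω) (by linarith)
    · refine Eventually.of_forall fun ω => ?_
      have hev : ∀ᶠ c : ℕ in atTop, max 0 (g ω - c) = 0 := by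
        obtain ⟨c₀, hc₀⟩ := exists_nat_ge (g ω)
        refine eventually_atTop.2 ⟨c₀, fun c hc => ?_⟩
        have h1 : (c₀ : ℝ) ≤ c := by exact_mod_cast hc
        exact max_eq_left (by linarith)
      exact Tendsto.congr' (hev.mono fun c hc => hc.symm) tendsto_const_nhds
  simpa using htend

private lemma main_meas' (μ : Measure Ω) [IsProbabilityMeasure μ] {T : Ω → Ω}
    (hT : MeasurePreserving T μ μ) {f : Ω → ℝ} (hfm : Measurable f)
    (hf : Integrable f μ)
    (hdiv : ∀ᵐ ω ∂μ, Tendsto (fun n => birkhoffSum T f n ω) atTop atTop) :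
    0 < ∫ ω, f ω ∂μ := by
  obtain ⟨j, hj⟩ := exists_pos_set' μ hT hfm hdiv
  set δ : ℝ := 1 / ((j:ℝ) + 1) with hδdef
  have hδ : 0 < δ := by positivity
  set B : Set Ω := {ω | ∀ i : ℕ, δ ≤ birkhoffSum T f (i + 1) ω} with hBdef
  have hBpos : 0 < μ B := hj
  have hBmeas : MeasurableSet B := by
    have : B = ⋂ i : ℕ, {ω | δ ≤ birkhoffSum T f (i + 1) ω} := by
      ext ω; simp [hBdef, Set.mem_iInter]
    rw [this]
    exact MeasurableSet.iInter fun i =>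
      measurableSet_le measurable_const (measurable_birkhoffSum' hT.measurable hfm (i + 1))
  have hBprop : ∀ x ∈ B, ∀ i : ℕ, δ ≤ birkhoffSum T f (i + 1) x := fun x hx => hx
  set χ : Ω → ℝ := B.indicator (fun _ => (1:ℝ)) with hχdef
  have hχint : Integrable χ μ := (integrable_const (1:ℝ)).indicator hBmeas
  set β : ℝ := (μ B).toReal with hβdef
  have hβpos : 0 < β := ENNReal.toReal_pos hBpos.ne' (measure_ne_top μ B)
  have hχint_eq : ∫ ω, χ ω ∂μ = β := by
    rw [hχdef, integral_indicator_const (1:ℝ) hBmeas]; simp [hβdef]; rfl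
  set I : ℝ := ∫ ω, f ω ∂μ with hIdef
  -- the function M
  set M' : Ω → ℝ≥0∞ := fun ω => ⨆ m : ℕ, ENNReal.ofReal (-(birkhoffSum T f (m+1) ω)) with hM'def
  have hM'meas : Measurable M' :=
    Measurable.iSup fun m => (measurable_birkhoffSum' hT.measurable hfm (m+1)).neg.ennreal_ofReal
  set M : Ω → ℝ := fun ω => (M' ω).toReal with hMdef
  have hMmeas : Measurable M := hM'meas.ennreal_toReal
  have hM0 : ∀ ω, 0 ≤ M ω := fun ω => ENNReal.toReal_nonneg
  have haeM : ∀ᵐ ω ∂μ, ∀ m : ℕ, -(M ω) ≤ birkhoffSum T f (m + 1) ω := by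
    refine hdiv.mono fun ω hω => ?_
    obtain ⟨N, hN⟩ := eventually_atTop.1 (hω.eventually (eventually_ge_atTop (0:ℝ)))
    have hRne : (Finset.range (N + 1)).Nonempty := ⟨0, by simp⟩
    set C : ℝ := max 0 ((Finset.range (N + 1)).sup' hRne fun n => -(birkhoffSum T f n ω))
      with hCdef
    have hCbd : ∀ n : ℕ, -(birkhoffSum T f n ω) ≤ C := by
      intro n
      rcases le_or_gt n N with hle | hlt
      · refine le_trans (Finset.le_sup' (f := fun n => -(birkhoffSum T f n ω))
          (Finset.mem_range.2 (show n < N + 1 by omega))) (le_max_right _ _)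
      · have := hN n (by omega)
        have h0C : (0:ℝ) ≤ C := le_max_left _ _
        linarith
    have hfin : M' ω ≠ ⊤ := by
      refine ne_top_of_le_ne_top (show ENNReal.ofReal C ≠ ⊤ from ENNReal.ofReal_ne_top) ?_
      simp only [hM'def]
      refine iSup_le fun m => ?_
      exact ENNReal.ofReal_le_ofReal (hCbd (m+1))
    intro m
    have h1 : ENNReal.ofReal (-(birkhoffSum T f (m+1) ω)) ≤ M' ω := by
      simp only [hM'def]
      exact le_iSup (fun k : ℕ => ENNReal.ofReal (-(birkhoffSum T f (k+1) ω))) m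
    have h2 := ENNReal.toReal_mono hfin h1
    have h3 : -(birkhoffSum T f (m+1) ω) ≤
        (ENNReal.ofReal (-(birkhoffSum T f (m+1) ω))).toReal := by
      rcases le_or_gt (-(birkhoffSum T f (m+1) ω)) 0 with h | h
      · exact le_trans h ENNReal.toReal_nonneg
      · rw [ENNReal.toReal_ofReal h.le]
    have := le_trans h3 h2
    linarith
  -- negative part function
  set g : Ω → ℝ := fun ω => max 0 (-(f ω)) with hgdef
  have hgm : Measurable g := measurable_const.max hfm.neg
  have hg0 : ∀ ω, 0 ≤ g ω := fun ω => le_max_left _ _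
  have hgint : Integrable g μ := by
    have := hf.neg.pos_part
    refine this.congr (Eventually.of_forall fun ω => ?_)
    simp [hgdef, max_comm]
  -- the chain of inequalities, for every n and every c > 0
  have chain : ∀ (c : ℝ), 0 < c → ∀ n : ℕ,
      δ * ((n : ℝ) * β) ≤ (n : ℝ) * I + (∫ ω, min (c * n) (M ω) ∂μ)
        + (n : ℝ) * (∫ ω, max 0 (g ω - c) ∂μ) + (∫ ω, min (δ * n) (M ω) ∂μ) := by
    intro c hc n
    set gc : Ω → ℝ := fun ω => max 0 (g ω - c) with hgcdef
    have hgcm : Measurable gc := measurable_const.max (hgm.sub measurable_const)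
    have hgc0 : ∀ ω, 0 ≤ gc ω := fun ω => le_max_left _ _
    have hgcint : Integrable gc μ := by
      refine hgint.mono' hgcm.aestronglyMeasurable (Eventually.of_forall fun ω => ?_)
      rw [Real.norm_eq_abs, abs_of_nonneg (hgc0 ω)]
      have : g ω - c ≤ g ω := by linarith
      exact max_le (hg0 ω) this
    have hSn_int : Integrable (fun ω => birkhoffSum T f n ω) μ := integrable_comp_iterate' hT hf n
    have hSgc_int : Integrable (fun ω => birkhoffSum T gc n ω) μ :=
      integrable_comp_iterate' hT hgcint n
    have hVn_int : Integrable (fun ω => birkhoffSum T χ n ω) μ := integrable_comp_iterate' hT hχint n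
    have hmax_int : Integrable (fun ω => max 0 (birkhoffSum T f n ω)) μ := by
      refine hSn_int.pos_part.congr (Eventually.of_forall fun ω => ?_)
      simp [max_comm]
    have hneg_int : Integrable (fun ω => max 0 (-(birkhoffSum T f n ω))) μ := by
      refine hSn_int.neg.pos_part.congr (Eventually.of_forall fun ω => ?_)
      simp [max_comm]
    have hminc_int : ∀ a : ℝ, 0 ≤ a → Integrable (fun ω => min a (M ω)) μ := by
      intro a ha
      refine (integrable_const a).mono' (measurable_const.min hMmeas).aestronglyMeasurable
        (Eventually.of_forall fun ω => ?_)
      rw [Real.norm_eq_abs, abs_of_nonneg (le_min ha (hM0 ω))]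
      exact min_le_left _ _
    have hδn : (0:ℝ) ≤ δ * n := by positivity
    have hcn : (0:ℝ) ≤ c * n := by positivity
    -- step 1 : ∫ δ V_n = δ n β
    have h1 : δ * ((n : ℝ) * β) = ∫ ω, δ * birkhoffSum T χ n ω ∂μ := by
      rw [integral_const_mul, integral_birkhoffSum'' hT hχint n, hχint_eq]
    -- step 2
    have h2 : ∫ ω, δ * birkhoffSum T χ n ω ∂μ
        ≤ ∫ ω, (max 0 (birkhoffSum T f n ω) + min (δ * n) (M ω)) ∂μ := by
      refine integral_mono_ae (hVn_int.const_mul δ) (hmax_int.add (hminc_int _ hδn)) ?_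
      refine haeM.mono fun ω hω => ?_
      have := main_pointwise' T f B hδ.le hBprop ω (hM0 ω) hω n
      calc δ * birkhoffSum T χ n ω ≤ min (δ * n) (max 0 (birkhoffSum T f n ω) + M ω) := this
        _ ≤ max 0 (birkhoffSum T f n ω) + min (δ * n) (M ω) :=
            min_add_le'' (le_max_left _ _) (hM0 ω)
    -- step 4 : ∫ max 0 S_n = n I + ∫ max 0 (-S_n)
    have h4 : ∫ ω, max 0 (birkhoffSum T f n ω) ∂μ
        = (n : ℝ) * I + ∫ ω, max 0 (-(birkhoffSum T f n ω)) ∂μ := by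
      have hpt : ∀ ω, max 0 (birkhoffSum T f n ω)
          = birkhoffSum T f n ω + max 0 (-(birkhoffSum T f n ω)) := by
        intro ω
        rcases le_total (birkhoffSum T f n ω) 0 with h | h
        · rw [max_eq_left h, max_eq_right (by linarith)]; ring
        · rw [max_eq_right h, max_eq_left (by linarith)]; ring
      calc ∫ ω, max 0 (birkhoffSum T f n ω) ∂μ
          = ∫ ω, (birkhoffSum T f n ω + max 0 (-(birkhoffSum T f n ω))) ∂μ := by
            exact integral_congr_ae (Eventually.of_forall hpt)
        _ = (∫ ω, birkhoffSum T f n ω ∂μ) + ∫ ω, max 0 (-(birkhoffSum T f n ω)) ∂μ :=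
            integral_add hSn_int hneg_int
        _ = (n : ℝ) * I + ∫ ω, max 0 (-(birkhoffSum T f n ω)) ∂μ := by
            rw [integral_birkhoffSum'' hT hf n]
    -- step 5 : ∫ max 0 (-S_n) ≤ ∫ min (c n) M + ∫ birkhoffSum gc n
    have h5 : ∫ ω, max 0 (-(birkhoffSum T f n ω)) ∂μ
        ≤ (∫ ω, min (c * n) (M ω) ∂μ) + (n : ℝ) * ∫ ω, gc ω ∂μ := by
      have hmono : ∀ᵐ ω ∂μ, max 0 (-(birkhoffSum T f n ω))
          ≤ min (c * n) (M ω) + birkhoffSum T gc n ω := by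
        refine haeM.mono fun ω hω => ?_
        have hb1 : max 0 (-(birkhoffSum T f n ω)) ≤ M ω := by
          refine max_le (hM0 ω) ?_
          rcases Nat.eq_zero_or_pos n with rfl | hn
          · simpa using hM0 ω
          · have := hω (n - 1)
            have hrw : n - 1 + 1 = n := by omega
            rw [hrw] at this
            linarith
        have hb2 : -(birkhoffSum T f n ω) ≤ birkhoffSum T g n ω := by
          rw [birkhoffSum, birkhoffSum, ← Finset.sum_neg_distrib]
          refine Finset.sum_le_sum fun k _ => ?_
          exact le_max_right _ _
        have hb3 : birkhoffSum T g n ω ≤ c * n + birkhoffSum T gc n ω := by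
          rw [birkhoffSum, birkhoffSum]
          have : ∀ k ∈ Finset.range n, g (T^[k] ω) ≤ c + gc (T^[k] ω) := by
            intro k _
            rcases le_total (g (T^[k] ω)) c with h | h
            · have := hgc0 (T^[k] ω); linarith
            · have : gc (T^[k] ω) = g (T^[k] ω) - c := max_eq_right (by linarith)
              linarith
          calc ∑ k ∈ Finset.range n, g (T^[k] ω)
              ≤ ∑ k ∈ Finset.range n, (c + gc (T^[k] ω)) := Finset.sum_le_sum this
            _ = c * n + ∑ k ∈ Finset.range n, gc (T^[k] ω) := by
                rw [Finset.sum_add_distrib, Finset.sum_const, Finset.card_range]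
                ring
        have hgcnn : 0 ≤ birkhoffSum T gc n ω :=
          Finset.sum_nonneg fun k _ => hgc0 _
        have hgnn : 0 ≤ birkhoffSum T g n ω :=
          Finset.sum_nonneg fun k _ => hg0 _
        have hmin1 : max 0 (-(birkhoffSum T f n ω)) ≤ min (M ω) (birkhoffSum T g n ω) :=
          le_min hb1 (max_le hgnn hb2)
        have hmin2 : min (M ω) (birkhoffSum T g n ω)
            ≤ min (M ω) (birkhoffSum T gc n ω + c * n) :=
          min_le_min (le_refl _) (by linarith)
        have hmin3 : min (M ω) (birkhoffSum T gc n ω + c * n)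
            ≤ birkhoffSum T gc n ω + min (M ω) (c * n) := min_add_le'' hgcnn hcn
        rw [min_comm (M ω) (c * n)] at hmin3
        linarith
      calc ∫ ω, max 0 (-(birkhoffSum T f n ω)) ∂μ
          ≤ ∫ ω, (min (c * n) (M ω) + birkhoffSum T gc n ω) ∂μ :=
            integral_mono_ae hneg_int ((hminc_int _ hcn).add hSgc_int) hmono
        _ = (∫ ω, min (c * n) (M ω) ∂μ) + ∫ ω, birkhoffSum T gc n ω ∂μ :=
            integral_add (hminc_int _ hcn) hSgc_int
        _ = (∫ ω, min (c * n) (M ω) ∂μ) + (n : ℝ) * ∫ ω, gc ω ∂μ := by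
            rw [integral_birkhoffSum'' hT hgcint n]
    -- combine
    have h3 : ∫ ω, (max 0 (birkhoffSum T f n ω) + min (δ * n) (M ω)) ∂μ
        = (∫ ω, max 0 (birkhoffSum T f n ω) ∂μ) + ∫ ω, min (δ * n) (M ω) ∂μ :=
      integral_add hmax_int (hminc_int _ hδn)
    linarith
  -- conclude
  have hfinal : δ * β ≤ I := by
    by_contra hcon
    push_neg at hcon
    set ε : ℝ := (δ * β - I) / 3 with hεdef
    have hεpos : 0 < ε := by rw [hεdef]; linarith
    obtain ⟨c₀, hc₀⟩ :=
      eventually_atTop.1 ((trunc_aux' hgm hgint hg0).eventually_lt_const hεpos)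
    set c : ℝ := ((c₀ : ℝ) + 1) with hcdef
    have hcpos : 0 < c := by positivity
    have hG : ∫ ω, max 0 (g ω - c) ∂μ < ε := by
      have := hc₀ (c₀ + 1) (by omega)
      simpa [hcdef] using this
    obtain ⟨n₁, hn₁⟩ :=
      eventually_atTop.1 ((lim_aux' (μ := μ) hMmeas hM0 hcpos).eventually_lt_const hεpos)
    obtain ⟨n₂, hn₂⟩ :=
      eventually_atTop.1 ((lim_aux' (μ := μ) hMmeas hM0 hδ).eventually_lt_const hεpos)
    set n : ℕ := max (max n₁ n₂) 1 with hndef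
    have hnn : (0:ℝ) < n := by
      have : (1:ℕ) ≤ n := le_max_right _ _
      exact_mod_cast Nat.lt_of_lt_of_le Nat.zero_lt_one this
    have hX : (∫ ω, min (c * n) (M ω) ∂μ) < ε * n := by
      have := hn₁ n (le_trans (le_max_left _ _) (le_max_left _ _))
      rw [div_lt_iff₀ hnn] at this
      linarith
    have hY : (∫ ω, min (δ * n) (M ω) ∂μ) < ε * n := by
      have := hn₂ n (le_trans (le_max_right _ _) (le_max_left _ _))
      rw [div_lt_iff₀ hnn] at this
      linarith
    have hchain := chain c hcpos n
    have hGn : (n : ℝ) * (∫ ω, max 0 (g ω - c) ∂μ) < (n:ℝ) * ε :=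
      mul_lt_mul_of_pos_left hG hnn
    have hlt : (n : ℝ) * (δ * β) < (n : ℝ) * (δ * β) := by
      calc (n : ℝ) * (δ * β) = δ * ((n : ℝ) * β) := by ring
        _ ≤ (n : ℝ) * I + (∫ ω, min (c * n) (M ω) ∂μ)
            + (n : ℝ) * (∫ ω, max 0 (g ω - c) ∂μ) + (∫ ω, min (δ * n) (M ω) ∂μ) := hchain
        _ < (n : ℝ) * I + ε * n + (n:ℝ) * ε + ε * n := by linarith
        _ = (n : ℝ) * (I + 3 * ε) := by ring
        _ = (n : ℝ) * (δ * β) := by rw [hεdef]; ring_nf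
    exact lt_irrefl _ hlt
  exact lt_of_lt_of_le (mul_pos hδ hβpos) hfinal

end BirkhoffPosAux

/-- If `T` is a measure-preserving transformation of a probability space `(Ω, μ)` and
`f ∈ L¹(Ω, μ)` is such that the Birkhoff sums `∑_{m=0}^{n-1} f(T^m ω)` tend to `+∞` for
`μ`-almost every `ω`, then `∫ f dμ > 0`. -/
theorem pos_integral_of_birkhoff_sums_tendsto_atTop
    {Ω : Type*} [MeasurableSpace Ω]
    (μ : Measure Ω) [IsProbabilityMeasure μ]
    (T : Ω → Ω) (hT : MeasurePreserving T μ μ)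
    (f : Ω → ℝ) (hf : Integrable f μ)
    (hdiv : ∀ᵐ ω ∂μ,
      Tendsto (fun n : ℕ => ∑ m ∈ Finset.range n, f (T^[m] ω)) atTop atTop) :
    0 < ∫ ω, f ω ∂μ := by
  have hsm := hf.1
  set f' : Ω → ℝ := hsm.mk f with hf'def
  have hmeas : Measurable f' := hsm.stronglyMeasurable_mk.measurable
  have haeeq : f =ᵐ[μ] f' := hsm.ae_eq_mk
  have hint' : Integrable f' μ := hf.congr haeeq
  have hiter : ∀ᵐ ω ∂μ, ∀ m : ℕ, f (T^[m] ω) = f' (T^[m] ω) := by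
    rw [ae_all_iff]
    intro m
    exact (hT.iterate m).quasiMeasurePreserving.ae_eq_comp haeeq
  have hdiv' : ∀ᵐ ω ∂μ, Tendsto (fun n => birkhoffSum T f' n ω) atTop atTop := by
    refine (hdiv.and hiter).mono fun ω ⟨h1, h2⟩ => ?_
    have : ∀ n : ℕ, (∑ m ∈ Finset.range n, f (T^[m] ω)) = birkhoffSum T f' n ω := by
      intro n
      exact Finset.sum_congr rfl fun m _ => h2 m
    exact h1.congr fun n => this n
  have := main_meas' μ hT hmeas hint' hdiv'
  rwa [integral_congr_ae haeeq]
end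

section
/- For z ∈ ℂ with Im z ≠ 0, the function x ↦ 1/(x - z) - 1/(x + i) is Lebesgue integrable on ℝ, and ∫_ℝ ( 1/(x - z) - 1/(x + i) ) dx equals 2πi if Im z > 0 and equals 0 if Im z < 0. -/
open MeasureTheory Filter Topology Complex

lemma aux_inv_bot : Tendsto (fun x : ℝ => x⁻¹) atBot (𝓝 0) := by
  have h := (tendsto_inv_atTop_zero.comp (tendsto_neg_atBot_atTop : Tendsto (fun x : ℝ => -x) atBot atTop)).neg
  rw [neg_zero] at h
  exact h.congr fun x => by simp [Function.comp, inv_neg]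

lemma aux_ratio (c : ℂ) (l : Filter ℝ) (hinv : Tendsto (fun x : ℝ => x⁻¹) l (𝓝 0))
    (hne : ∀ᶠ x : ℝ in l, x ≠ 0) :
    Tendsto (fun x : ℝ => ((x : ℂ) + c) / x) l (𝓝 1) := by
  have h0 : Tendsto (fun x : ℝ => ((x⁻¹ : ℝ) : ℂ)) l (𝓝 0) := by
    exact ((Complex.continuous_ofReal.tendsto 0).comp hinv).congr fun x => rfl
  have h : Tendsto (fun x : ℝ => 1 + c * ((x⁻¹ : ℝ) : ℂ)) l (𝓝 1) := by
    simpa using tendsto_const_nhds.add (h0.const_mul c)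
  refine h.congr' ?_
  filter_upwards [hne] with x hx
  have hx' : (x : ℂ) ≠ 0 := by exact_mod_cast hx
  push_cast
  field_simp

-- re/abs limits
lemma aux_cancel (a b x : ℝ) (hx : x ≠ 0) : (a / x) / (b / x) = a / b := by
  rcases eq_or_ne b 0 with hb | hb
  · simp [hb]
  · field_simp

lemma aux_phi_cont : ContinuousAt (fun w : ℂ => w.re / ‖w‖) 1 :=
  (Complex.continuous_re.continuousAt).div (continuous_norm.continuousAt) (by simp)

lemma aux_eventually_eq_top (c : ℂ) :
    ∀ᶠ x : ℝ in atTop, (fun w : ℂ => w.re / ‖w‖) (((x : ℂ) + c) / x)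
      = ((x : ℂ) + c).re / ‖(x : ℂ) + c‖ := by
  filter_upwards [eventually_gt_atTop (0:ℝ)] with x hx
  simp only [Complex.div_ofReal_re, norm_div, Complex.norm_real, Real.norm_eq_abs, abs_of_pos hx]
  exact aux_cancel _ _ _ hx.ne'

lemma aux_re_abs_top (c : ℂ) :
    Tendsto (fun x : ℝ => ((x : ℂ) + c).re / ‖(x : ℂ) + c‖) atTop (𝓝 1) := by
  have h := aux_phi_cont.tendsto.comp (aux_ratio c atTop tendsto_inv_atTop_zero
    (((eventually_gt_atTop (0:ℝ)).mono fun x hx => hx.ne')))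
  simp only [Complex.one_re, norm_one, div_one] at h
  exact (h.congr' (aux_eventually_eq_top c))

lemma aux_cancel_neg (a b x : ℝ) (hx : x ≠ 0) : -((a / x) / (b / (-x))) = a / b := by
  rcases eq_or_ne b 0 with hb | hb
  · simp [hb]
  · field_simp

lemma aux_re_abs_bot (c : ℂ) :
    Tendsto (fun x : ℝ => ((x : ℂ) + c).re / ‖(x : ℂ) + c‖) atBot (𝓝 (-1)) := by
  have h := aux_phi_cont.tendsto.comp (aux_ratio c atBot aux_inv_bot
    (((eventually_lt_atBot (0:ℝ)).mono fun x hx => hx.ne)))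
  simp only [Complex.one_re, norm_one, div_one] at h
  refine Tendsto.congr' ?_ h.neg
  filter_upwards [eventually_lt_atBot (0:ℝ)] with x hx
  simp only [Function.comp, Complex.div_ofReal_re, norm_div, Complex.norm_real, Real.norm_eq_abs, abs_of_neg hx]
  exact aux_cancel_neg _ _ _ hx.ne

-- abs ratio → 1
lemma aux_abs_ratio (c c' : ℂ) (l : Filter ℝ)
    (h : Tendsto (fun x : ℝ => ((x : ℂ) + c) / x) l (𝓝 1))
    (h' : Tendsto (fun x : ℝ => ((x : ℂ) + c') / x) l (𝓝 1))
    (hne : ∀ᶠ x : ℝ in l, x ≠ 0) :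
    Tendsto (fun x : ℝ => ‖(x : ℂ) + c‖ / ‖(x : ℂ) + c'‖) l (𝓝 1) := by
  have ha := (continuous_norm.tendsto 1).comp h
  have hb := (continuous_norm.tendsto 1).comp h'
  simp only [norm_one] at ha hb
  have hd := ha.div hb one_ne_zero
  simp only [div_one] at hd
  refine Tendsto.congr' ?_ hd
  filter_upwards [hne] with x hx
  have e1 : ‖((x : ℂ) + c) / x‖ / ‖((x : ℂ) + c') / x‖
      = ‖(x : ℂ) + c‖ / ‖(x : ℂ) + c'‖ := by
    simp only [norm_div, Complex.norm_real, Real.norm_eq_abs]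
    exact aux_cancel _ _ _ (by simpa using hx)
  simpa [Function.comp] using e1

lemma aux_ne_zero (c : ℂ) (hc : c.im ≠ 0) (x : ℝ) : (x : ℂ) + c ≠ 0 := by
  intro h
  apply hc
  have := congrArg Complex.im h
  simpa using this

lemma aux_arg_pos_top (c : ℂ) (hc : 0 < c.im) :
    Tendsto (fun x : ℝ => Complex.arg ((x : ℂ) + c)) atTop (𝓝 0) := by
  have h := (Real.continuous_arccos.tendsto 1).comp (aux_re_abs_top c)
  rw [Real.arccos_one] at h
  refine Tendsto.congr (fun x => ?_) h
  simp only [Function.comp]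
  rw [Complex.arg_of_im_pos (by simpa using hc)]

lemma aux_arg_pos_bot (c : ℂ) (hc : 0 < c.im) :
    Tendsto (fun x : ℝ => Complex.arg ((x : ℂ) + c)) atBot (𝓝 Real.pi) := by
  have h := (Real.continuous_arccos.tendsto (-1)).comp (aux_re_abs_bot c)
  rw [Real.arccos_neg_one] at h
  refine Tendsto.congr (fun x => ?_) h
  simp only [Function.comp]
  rw [Complex.arg_of_im_pos (by simpa using hc)]

lemma aux_arg_neg_top (c : ℂ) (hc : c.im < 0) :
    Tendsto (fun x : ℝ => Complex.arg ((x : ℂ) + c)) atTop (𝓝 0) := by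
  have h := ((Real.continuous_arccos.tendsto 1).comp (aux_re_abs_top c)).neg
  rw [Real.arccos_one, neg_zero] at h
  refine Tendsto.congr (fun x => ?_) h
  simp only [Function.comp]
  rw [Complex.arg_of_im_neg (by simpa using hc)]

lemma aux_arg_neg_bot (c : ℂ) (hc : c.im < 0) :
    Tendsto (fun x : ℝ => Complex.arg ((x : ℂ) + c)) atBot (𝓝 (-Real.pi)) := by
  have h := ((Real.continuous_arccos.tendsto (-1)).comp (aux_re_abs_bot c)).neg
  rw [Real.arccos_neg_one] at h
  refine Tendsto.congr (fun x => ?_) h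
  simp only [Function.comp]
  rw [Complex.arg_of_im_neg (by simpa using hc)]

lemma aux_log_tendsto (c : ℂ) (hc : c.im ≠ 0) (l : Filter ℝ) (θ : ℝ)
    (habs : Tendsto (fun x : ℝ =>
      ‖(x : ℂ) + c‖ / ‖(x : ℂ) + Complex.I‖) l (𝓝 1))
    (harg : Tendsto (fun x : ℝ =>
      Complex.arg ((x : ℂ) + c) - Complex.arg ((x : ℂ) + Complex.I)) l (𝓝 θ)) :
    Tendsto (fun x : ℝ => Complex.log ((x : ℂ) + c) - Complex.log ((x : ℂ) + Complex.I)) l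
      (𝓝 ((θ : ℂ) * Complex.I)) := by
  have hI : Complex.I.im ≠ 0 := by simp
  have hr : Tendsto (fun x : ℝ =>
      Real.log (‖(x : ℂ) + c‖) - Real.log (‖(x : ℂ) + Complex.I‖))
      l (𝓝 0) := by
    have h := ((Real.continuousAt_log one_ne_zero).tendsto).comp habs
    rw [Real.log_one] at h
    refine Tendsto.congr (fun x => ?_) h
    simp only [Function.comp]
    rw [Real.log_div (by simpa using aux_ne_zero c hc x) (by simpa using aux_ne_zero _ hI x)]
  have h1 : Tendsto (fun x : ℝ => ((Real.log (‖(x : ℂ) + c‖)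
      - Real.log (‖(x : ℂ) + Complex.I‖) : ℝ) : ℂ)) l (𝓝 0) := by
    exact ((Complex.continuous_ofReal.tendsto 0).comp hr).congr fun x => by
      simp [Function.comp]
  have h2 : Tendsto (fun x : ℝ => ((Complex.arg ((x : ℂ) + c)
      - Complex.arg ((x : ℂ) + Complex.I) : ℝ) : ℂ) * Complex.I) l (𝓝 ((θ : ℂ) * Complex.I)) := by
    have := ((Complex.continuous_ofReal.tendsto θ).comp harg).mul_const Complex.I
    exact this.congr fun x => rfl
  have h3 := h1.add h2
  rw [zero_add] at h3
  refine Tendsto.congr (fun x => ?_) h3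
  apply Complex.ext <;>
    simp [Complex.log_re, Complex.log_im, sub_eq_add_neg]

lemma aux_ev_top : ∀ᶠ x : ℝ in atTop, x ≠ 0 := (eventually_gt_atTop (0:ℝ)).mono fun x hx => hx.ne'
lemma aux_ev_bot : ∀ᶠ x : ℝ in atBot, x ≠ 0 := (eventually_lt_atBot (0:ℝ)).mono fun x hx => hx.ne

lemma aux_G_top (c : ℂ) (hc : c.im ≠ 0) :
    Tendsto (fun x : ℝ => Complex.log ((x : ℂ) + c) - Complex.log ((x : ℂ) + Complex.I))
      atTop (𝓝 0) := by
  have habs := aux_abs_ratio c Complex.I atTop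
    (aux_ratio c atTop tendsto_inv_atTop_zero aux_ev_top)
    (aux_ratio Complex.I atTop tendsto_inv_atTop_zero aux_ev_top) aux_ev_top
  have hargc : Tendsto (fun x : ℝ => Complex.arg ((x : ℂ) + c)) atTop (𝓝 0) := by
    rcases hc.lt_or_gt with h | h
    · exact aux_arg_neg_top c h
    · exact aux_arg_pos_top c h
  have hargI := aux_arg_pos_top Complex.I (by simp)
  have harg := hargc.sub hargI
  rw [sub_zero] at harg
  simpa using aux_log_tendsto c hc atTop 0 habs harg

lemma aux_G_bot_pos (c : ℂ) (hc : 0 < c.im) :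
    Tendsto (fun x : ℝ => Complex.log ((x : ℂ) + c) - Complex.log ((x : ℂ) + Complex.I))
      atBot (𝓝 0) := by
  have habs := aux_abs_ratio c Complex.I atBot
    (aux_ratio c atBot aux_inv_bot aux_ev_bot)
    (aux_ratio Complex.I atBot aux_inv_bot aux_ev_bot) aux_ev_bot
  have harg := (aux_arg_pos_bot c hc).sub (aux_arg_pos_bot Complex.I (by simp))
  rw [sub_self] at harg
  simpa using aux_log_tendsto c hc.ne' atBot 0 habs harg

lemma aux_G_bot_neg (c : ℂ) (hc : c.im < 0) :
    Tendsto (fun x : ℝ => Complex.log ((x : ℂ) + c) - Complex.log ((x : ℂ) + Complex.I))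
      atBot (𝓝 (-(2 * Real.pi * Complex.I))) := by
  have habs := aux_abs_ratio c Complex.I atBot
    (aux_ratio c atBot aux_inv_bot aux_ev_bot)
    (aux_ratio Complex.I atBot aux_inv_bot aux_ev_bot) aux_ev_bot
  have harg := (aux_arg_neg_bot c hc).sub (aux_arg_pos_bot Complex.I (by simp))
  have h := aux_log_tendsto c hc.ne atBot (-Real.pi - Real.pi) habs harg
  have : ((-Real.pi - Real.pi : ℝ) : ℂ) * Complex.I = -(2 * Real.pi * Complex.I) := by
    push_cast; ring
  rwa [this] at h

lemma aux_sub_ne (z : ℂ) (hz : z.im ≠ 0) (x : ℝ) : (x : ℂ) - z ≠ 0 := by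
  rw [sub_eq_add_neg]
  exact aux_ne_zero (-z) (by simpa using hz) x

lemma aux_deriv (z : ℂ) (hz : z.im ≠ 0) (x : ℝ) :
    HasDerivAt (fun x : ℝ => Complex.log ((x : ℂ) - z) - Complex.log ((x : ℂ) + Complex.I))
      (1 / ((x : ℂ) - z) - 1 / ((x : ℂ) + Complex.I)) x := by
  have h1 : HasDerivAt (fun w : ℂ => Complex.log (w - z)) (((x : ℂ) - z)⁻¹) (x : ℂ) := by
    have hs : (x : ℂ) - z ∈ Complex.slitPlane := by
      rw [Complex.mem_slitPlane_iff]
      right; simpa using hz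
    have := (Complex.hasDerivAt_log hs).comp (x : ℂ) ((hasDerivAt_id ((x : ℂ))).sub_const z)
    simpa [Function.comp_def] using this
  have h2 : HasDerivAt (fun w : ℂ => Complex.log (w + Complex.I)) (((x : ℂ) + Complex.I)⁻¹)
      (x : ℂ) := by
    have hs : (x : ℂ) + Complex.I ∈ Complex.slitPlane := by
      rw [Complex.mem_slitPlane_iff]
      right; simp
    have := (Complex.hasDerivAt_log hs).comp (x : ℂ) ((hasDerivAt_id ((x : ℂ))).add_const Complex.I)
    simpa [Function.comp_def] using this
  have := (h1.comp_ofReal).sub (h2.comp_ofReal)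
  simp only [one_div]
  exact this

lemma aux_integrable (z : ℂ) (hz : z.im ≠ 0) :
    Integrable (fun x : ℝ => 1 / ((x : ℂ) - z) - 1 / ((x : ℂ) + Complex.I)) volume := by
  have hIne : ∀ x : ℝ, (x : ℂ) + Complex.I ≠ 0 := aux_ne_zero Complex.I (by simp)
  have hcont : Continuous (fun x : ℝ => 1 / ((x : ℂ) - z) - 1 / ((x : ℂ) + Complex.I)) := by
    apply Continuous.sub
    · exact continuous_const.div (by continuity) (aux_sub_ne z hz)
    · exact continuous_const.div (by continuity) hIne
  rcases eq_or_ne z (-Complex.I) with rfl | hne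
  · have : (fun x : ℝ => 1 / ((x : ℂ) - (-Complex.I)) - 1 / ((x : ℂ) + Complex.I))
        = fun _ => 0 := by
      funext x; simp [sub_neg_eq_add]
    rw [this]
    exact integrable_zero _ _ _
  · set K := ‖z + Complex.I‖ with hK
    have hK0 : 0 < K := by
      rw [hK]
      simp only [norm_pos_iff]
      intro h
      exact hne (by linear_combination h)
    have hm0 : 0 < min (1/2 : ℝ) (|z.im| / (4 * K ^ 2)) := by
      have : 0 < |z.im| := abs_pos.mpr hz
      positivity
    set m := min (1/2 : ℝ) (|z.im| / (4 * K ^ 2)) with hm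
    refine Integrable.mono' ((integrable_inv_one_add_sq).const_mul (K / m))
      hcont.aestronglyMeasurable ?_
    filter_upwards with x
    set A := ‖(x : ℂ) - z‖ with hA
    set B := ‖(x : ℂ) + Complex.I‖ with hB
    have hB2 : B ^ 2 = 1 + x ^ 2 := by
      rw [hB, Complex.sq_norm, Complex.normSq_apply]
      simp
      ring
    have hAim : |z.im| ≤ A := by
      have := Complex.abs_im_le_norm ((x : ℂ) - z)
      simpa using this
    have hB1 : (1 : ℝ) ≤ B := by
      have := Complex.abs_im_le_norm ((x : ℂ) + Complex.I)
      simpa using this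
    have hprod : m * (1 + x ^ 2) ≤ A * B := by
      rcases le_or_gt B (2 * K) with hBK | hBK
      · have h1 : m * (1 + x ^ 2) ≤ (|z.im| / (4 * K ^ 2)) * B ^ 2 := by
          rw [hB2]
          exact mul_le_mul (min_le_right _ _) le_rfl (by positivity) (by positivity)
        have h2 : (|z.im| / (4 * K ^ 2)) * B ^ 2 ≤ |z.im| := by
          rw [div_mul_eq_mul_div, div_le_iff₀ (by positivity)]
          have : B ^ 2 ≤ (2 * K) ^ 2 := by
            apply pow_le_pow_left₀ (by linarith) hBK
          nlinarith [abs_nonneg z.im]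
        have h3 : |z.im| ≤ A * B := by
          calc |z.im| = |z.im| * 1 := (mul_one _).symm
          _ ≤ A * B := mul_le_mul hAim hB1 zero_le_one (le_trans (abs_nonneg _) hAim)
        linarith
      · have hKB : K ≤ B / 2 := by linarith
        have hAB : B / 2 ≤ A := by
          have htri : B - K ≤ A := by
            have h4 := norm_sub_norm_le ((x : ℂ) + Complex.I) (z + Complex.I)
            calc B - K ≤ ‖((x : ℂ) + Complex.I) - (z + Complex.I)‖ := h4
            _ = A := by rw [hA]; congr 1; ring
          linarith
        have h1 : m * (1 + x ^ 2) ≤ (1/2) * B ^ 2 := by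
          rw [hB2]
          exact mul_le_mul (min_le_left _ _) le_rfl (by positivity) (by norm_num)
        have h2 : (1/2) * B ^ 2 ≤ A * B := by
          have : (1/2) * B ^ 2 = (B / 2) * B := by ring
          rw [this]
          exact mul_le_mul_of_nonneg_right hAB (by linarith)
        linarith
    have hfx : ‖1 / ((x : ℂ) - z) - 1 / ((x : ℂ) + Complex.I)‖ = K / (A * B) := by
      have hxz := aux_sub_ne z hz x
      have hxI := hIne x
      have : 1 / ((x : ℂ) - z) - 1 / ((x : ℂ) + Complex.I)
          = (z + Complex.I) / (((x : ℂ) - z) * ((x : ℂ) + Complex.I)) := by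
        field_simp
        ring
      rw [this, norm_div, norm_mul]
    rw [hfx]
    rw [div_le_iff₀ (by nlinarith [hK0, abs_pos.mpr hz]), mul_assoc]
    calc K = K / m * m := by field_simp
    _ ≤ K / m * ((1 + x ^ 2)⁻¹ * (A * B)) := by
        apply mul_le_mul_of_nonneg_left _ (by positivity)
        rw [inv_mul_eq_div, le_div_iff₀ (by positivity)]
        linarith
    

/-- For non-real `z`, the function `x ↦ 1/(x - z) - 1/(x + i)` is Lebesgue integrable on `ℝ`
and its integral equals `2πi` if `Im z > 0` and `0` if `Im z < 0`. -/
theorem integral_resolvent_kernel_difference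
    (z : ℂ) (hz : z.im ≠ 0) :
    Integrable (fun x : ℝ => 1 / ((x : ℂ) - z) - 1 / ((x : ℂ) + Complex.I)) volume ∧
    (0 < z.im →
      ∫ x : ℝ, (1 / ((x : ℂ) - z) - 1 / ((x : ℂ) + Complex.I)) =
        2 * Real.pi * Complex.I) ∧
    (z.im < 0 →
      ∫ x : ℝ, (1 / ((x : ℂ) - z) - 1 / ((x : ℂ) + Complex.I)) = 0) := by
  have hint := aux_integrable z hz
  have hsub : ∀ x : ℝ, (x : ℂ) + (-z) = (x : ℂ) - z := fun x => (sub_eq_add_neg _ _).symm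
  have htop : Tendsto (fun x : ℝ => Complex.log ((x : ℂ) - z) - Complex.log ((x : ℂ) + Complex.I))
      atTop (𝓝 0) :=
    (aux_G_top (-z) (by simpa using hz)).congr fun x => by rw [hsub]
  refine ⟨hint, ?_, ?_⟩
  · intro him
    have hbot := (aux_G_bot_neg (-z) (by simpa using him)).congr fun x => by rw [hsub]
    have h := integral_of_hasDerivAt_of_tendsto (aux_deriv z hz) hint hbot htop
    rw [h, zero_sub, neg_neg]
  · intro him
    have hbot := (aux_G_bot_pos (-z) (by simpa using him)).congr fun x => by rw [hsub]
    have h := integral_of_hasDerivAt_of_tendsto (aux_deriv z hz) hint hbot htop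
    rw [h, sub_zero]
end

section
/- Let r : ℝ → ℝ be a bounded, non-negative measurable function with ∫_ℝ r(x) dx = 1, and fix E ∈ ℝ. Define the integral operator T₁ by (T₁ f)(x) = ∫_ℝ r(E - x - y⁻¹) |y|⁻¹ f(y) dy. Then for every f ∈ L²(ℝ), T₁ f ∈ L²(ℝ) with ‖T₁ f‖_{L²} ≤ ‖f‖_{L²}. -/
open MeasureTheory
open scoped ENNReal NNReal

noncomputable section

/-- The Kunz–Souillard integral operator `T₁`:
`(T₁ f)(x) = ∫ r(E - x - y⁻¹) |y|⁻¹ f(y) dy`. -/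
def T1 (r : ℝ → ℝ) (E : ℝ) (f : ℝ → ℝ) : ℝ → ℝ :=
  fun x => ∫ y : ℝ, r (E - x - y⁻¹) * |y|⁻¹ * f y

namespace T1Aux

lemma lintegral_half (s : Set ℝ) (hs : MeasurableSet s) (hne : ∀ x ∈ s, x ≠ 0)
    (him : Inv.inv '' s = s) (φ : ℝ → ℝ≥0∞) :
    ∫⁻ u in s, φ u = ∫⁻ y in s, ENNReal.ofReal ((y ^ 2)⁻¹) * φ y⁻¹ := by
  conv_lhs => rw [← him]
  rw [lintegral_image_eq_lintegral_abs_det_fderiv_mul volume hs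
      (f' := fun x => (1 : ℝ →L[ℝ] ℝ).smulRight (-(x ^ 2)⁻¹))
      (fun x hx => ((hasDerivAt_inv (hne x hx)).hasDerivWithinAt).hasFDerivWithinAt)
      (inv_injective.injOn) φ]
  refine setLIntegral_congr_fun hs (fun x hx => ?_)
  rw [ContinuousLinearMap.det_smulRight, ContinuousLinearMap.one_apply, one_mul, abs_neg, abs_of_nonneg (inv_nonneg.2 (sq_nonneg x))]

lemma lintegral_inv_eq (φ : ℝ → ℝ≥0∞) :
    ∫⁻ y, ENNReal.ofReal ((y ^ 2)⁻¹) * φ y⁻¹ = ∫⁻ u, φ u := by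
  have hcompl : ({(0:ℝ)}ᶜ : Set ℝ) =ᵐ[volume] (Set.univ : Set ℝ) := by
    rw [MeasureTheory.ae_eq_univ, compl_compl]
    exact measure_singleton 0
  have hsplit : ∀ ψ : ℝ → ℝ≥0∞,
      ∫⁻ u, ψ u = (∫⁻ u in Set.Iio 0, ψ u) + ∫⁻ u in Set.Ioi 0, ψ u := by
    intro ψ
    rw [← lintegral_union measurableSet_Ioi (Set.disjoint_left.mpr fun x (hx : x ∈ Set.Iio 0) (hx' : x ∈ Set.Ioi 0) => lt_asymm hx hx'), Set.Iio_union_Ioi,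
      ← setLIntegral_univ ψ]
    exact (setLIntegral_congr hcompl).symm
  have himIio : Inv.inv '' Set.Iio (0:ℝ) = Set.Iio 0 := by
    ext y
    simp only [Set.mem_image, Set.mem_Iio]
    constructor
    · rintro ⟨x, hx, rfl⟩; exact inv_lt_zero.2 hx
    · intro hy; exact ⟨y⁻¹, inv_lt_zero.2 hy, inv_inv y⟩
  have himIoi : Inv.inv '' Set.Ioi (0:ℝ) = Set.Ioi 0 := by
    ext y
    simp only [Set.mem_image, Set.mem_Ioi]
    constructor
    · rintro ⟨x, hx, rfl⟩; exact inv_pos.2 hx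
    · intro hy; exact ⟨y⁻¹, inv_pos.2 hy, inv_inv y⟩
  rw [hsplit φ, hsplit (fun y => ENNReal.ofReal ((y ^ 2)⁻¹) * φ y⁻¹),
    ← lintegral_half _ measurableSet_Iio (fun x hx => ne_of_lt hx) himIio φ,
    ← lintegral_half _ measurableSet_Ioi (fun x hx => ne_of_gt hx) himIoi φ]

theorem aux (r : ℝ → ℝ) (hr_meas : Measurable r) (hr_nonneg : ∀ x, 0 ≤ r x)
    (hr_prob : ∫ x, r x = 1)
    (E : ℝ) (f : ℝ → ℝ) (hf_meas : Measurable f) (hf : MemLp f 2 volume) :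
    MemLp (T1 r E f) 2 volume ∧
      eLpNorm (T1 r E f) 2 volume ≤ eLpNorm f 2 volume := by
  set R : ℝ → ℝ≥0∞ := fun t => ENNReal.ofReal (r t) with hRdef
  have hRmeas : Measurable R := hr_meas.ennreal_ofReal
  have hr_int : Integrable r := by
    by_contra h
    rw [integral_undef h] at hr_prob
    norm_num at hr_prob
  have hR1 : ∫⁻ t, R t = 1 := by
    rw [hRdef]
    rw [← ofReal_integral_eq_lintegral_ofReal hr_int (Filter.Eventually.of_forall hr_nonneg),
      hr_prob, ENNReal.ofReal_one]
  have htrans : ∀ c : ℝ, ∫⁻ x, R (c - x) = 1 := fun c => by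
    rw [(Measure.measurePreserving_sub_left volume c).lintegral_comp hRmeas, hR1]
  have hA : ∀ x : ℝ, (∫⁻ y, ENNReal.ofReal ((y ^ 2)⁻¹) * R (E - x - y⁻¹)) = 1 := by
    intro x
    rw [lintegral_inv_eq (fun u => R (E - x - u))]
    exact htrans (E - x)
  set F : ℝ → ℝ≥0∞ := fun y => (‖f y‖₊ : ℝ≥0∞) with hFdef
  have hFmeas : Measurable F := hf_meas.nnnorm.coe_nnreal_ennreal
  set Bx : ℝ → ℝ≥0∞ := fun x => ∫⁻ y, R (E - x - y⁻¹) * F y ^ (2:ℝ) with hBdef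
  -- pointwise bound
  have hpt : ∀ x, (‖T1 r E f x‖₊ : ℝ≥0∞) ^ (2:ℝ) ≤ Bx x := by
    intro x
    have hRy : Measurable fun y : ℝ => R (E - x - y⁻¹) :=
      hRmeas.comp ((measurable_const (a := E - x)).sub measurable_inv)
    set a : ℝ → ℝ≥0∞ := fun y => R (E - x - y⁻¹) ^ (1/2:ℝ) * ENNReal.ofReal |y|⁻¹ with hadef
    set b : ℝ → ℝ≥0∞ := fun y => R (E - x - y⁻¹) ^ (1/2:ℝ) * F y with hbdef
    have hhalf : ∀ y : ℝ, R (E - x - y⁻¹) ^ (1/2:ℝ) * R (E - x - y⁻¹) ^ (1/2:ℝ)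
        = R (E - x - y⁻¹) := by
      intro y
      rw [← ENNReal.rpow_add_of_nonneg _ _ (by norm_num) (by norm_num)]
      norm_num
    have h1 : (‖T1 r E f x‖₊ : ℝ≥0∞) ≤ ∫⁻ y, a y * b y := by
      refine (enorm_integral_le_lintegral_enorm _).trans_eq ?_
      refine lintegral_congr fun y => ?_
      rw [enorm_mul, enorm_mul,
        Real.enorm_eq_ofReal (hr_nonneg _), Real.enorm_eq_ofReal (inv_nonneg.2 (abs_nonneg y)),
        hadef, hbdef]
      show _ = (R (E - x - y⁻¹) ^ (1/2:ℝ) * ENNReal.ofReal |y|⁻¹) *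
        (R (E - x - y⁻¹) ^ (1/2:ℝ) * F y)
      rw [mul_mul_mul_comm, hhalf y, ← mul_assoc]
      rfl
    have hameas : Measurable a := (hRy.pow_const _).mul (measurable_abs.inv.ennreal_ofReal)
    have hbmeas : Measurable b := (hRy.pow_const _).mul hFmeas
    have hCS := ENNReal.lintegral_mul_le_Lp_mul_Lq volume
      (show Real.HolderConjugate 2 2 from Real.HolderConjugate.two_two) hameas.aemeasurable hbmeas.aemeasurable
    have ha2 : (∫⁻ y, a y ^ (2:ℝ)) = 1 := by
      rw [← hA x]
      refine lintegral_congr fun y => ?_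
      have hw : (ENNReal.ofReal |y|⁻¹) ^ (2:ℝ) = ENNReal.ofReal ((y ^ 2)⁻¹) := by
        rw [ENNReal.ofReal_rpow_of_nonneg (inv_nonneg.2 (abs_nonneg y)) (by norm_num : (0:ℝ) ≤ 2)]
        congr 1
        rw [show ((2:ℝ)) = ((2:ℕ):ℝ) by norm_num, Real.rpow_natCast, inv_pow, sq_abs]
      rw [hadef]
      show (R (E - x - y⁻¹) ^ (1/2:ℝ) * ENNReal.ofReal |y|⁻¹) ^ (2:ℝ) = _
      rw [ENNReal.mul_rpow_of_nonneg _ _ (by norm_num : (0:ℝ) ≤ 2), ← ENNReal.rpow_mul,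
        show (1/2:ℝ) * 2 = 1 by norm_num, ENNReal.rpow_one, hw, mul_comm]
    have hb2 : (∫⁻ y, b y ^ (2:ℝ)) = Bx x := by
      refine lintegral_congr fun y => ?_
      show (R (E - x - y⁻¹) ^ (1/2:ℝ) * F y) ^ (2:ℝ) = R (E - x - y⁻¹) * F y ^ (2:ℝ)
      rw [ENNReal.mul_rpow_of_nonneg _ _ (by norm_num : (0:ℝ) ≤ 2), ← ENNReal.rpow_mul,
        show (1/2:ℝ) * 2 = 1 by norm_num, ENNReal.rpow_one]
    have hle : (‖T1 r E f x‖₊ : ℝ≥0∞) ≤ (Bx x) ^ (1/2:ℝ) := by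
      refine h1.trans (hCS.trans ?_)
      rw [ha2, hb2, ENNReal.one_rpow, one_mul]
    calc (‖T1 r E f x‖₊ : ℝ≥0∞) ^ (2:ℝ) ≤ ((Bx x) ^ (1/2:ℝ)) ^ (2:ℝ) :=
          ENNReal.rpow_le_rpow hle (by norm_num)
      _ = Bx x := by rw [← ENNReal.rpow_mul]; norm_num
  -- Tonelli
  have hBint : ∫⁻ x, Bx x = ∫⁻ y, F y ^ (2:ℝ) := by
    have hker : AEMeasurable (Function.uncurry fun x y : ℝ => R (E - x - y⁻¹) * F y ^ (2:ℝ))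
        ((volume : Measure ℝ).prod volume) := by
      refine Measurable.aemeasurable ?_
      have h1 : Measurable fun p : ℝ × ℝ => R (E - p.1 - p.2⁻¹) :=
        hRmeas.comp ((measurable_const.sub measurable_fst).sub measurable_snd.inv)
      exact h1.mul ((hFmeas.comp measurable_snd).pow_const _)
    rw [show (fun x => Bx x) = fun x => ∫⁻ y, R (E - x - y⁻¹) * F y ^ (2:ℝ) from rfl,
      lintegral_lintegral_swap hker]
    refine lintegral_congr fun y => ?_
    have : ∀ x : ℝ, E - x - y⁻¹ = (E - y⁻¹) - x := fun x => by ring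
    simp_rw [this]
    have hm : Measurable fun x : ℝ => R (E - y⁻¹ - x) :=
      hRmeas.comp (measurable_const.sub measurable_id)
    rw [lintegral_mul_const _ hm, htrans (E - y⁻¹), one_mul]
  -- conclusion
  have hTmeas : AEStronglyMeasurable (T1 r E f) volume := by
    have hk : StronglyMeasurable fun p : ℝ × ℝ => r (E - p.1 - p.2⁻¹) * |p.2|⁻¹ * f p.2 := by
      refine Measurable.stronglyMeasurable ?_
      exact ((hr_meas.comp ((measurable_const.sub measurable_fst).sub measurable_snd.inv)).mul
        (measurable_snd.abs.inv)).mul (hf_meas.comp measurable_snd)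
    exact hk.integral_prod_right'.aestronglyMeasurable
  have hnorm : eLpNorm (T1 r E f) 2 volume ≤ eLpNorm f 2 volume := by
    rw [eLpNorm_eq_lintegral_rpow_enorm_toReal two_ne_zero ENNReal.ofNat_ne_top,
      eLpNorm_eq_lintegral_rpow_enorm_toReal two_ne_zero ENNReal.ofNat_ne_top]
    simp only [ENNReal.toReal_ofNat]
    calc (∫⁻ x, (‖T1 r E f x‖₊ : ℝ≥0∞) ^ (2:ℝ)) ^ (1/2:ℝ)
        ≤ (∫⁻ x, Bx x) ^ (1/2:ℝ) :=
          ENNReal.rpow_le_rpow (lintegral_mono hpt) (by norm_num)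
      _ = (∫⁻ y, F y ^ (2:ℝ)) ^ (1/2:ℝ) := by rw [hBint]
  exact ⟨⟨hTmeas, lt_of_le_of_lt hnorm hf.2⟩, hnorm⟩

end T1Aux

/-- **The Kunz–Souillard operator `T₁` is a contraction on `L²`.** If `r` is a bounded
non-negative measurable probability density and `E ∈ ℝ`, then for every `f ∈ L²(ℝ)`,
`T₁ f ∈ L²(ℝ)` and `‖T₁ f‖_{L²} ≤ ‖f‖_{L²}`. -/
theorem T1_contraction
    (r : ℝ → ℝ) (hr_meas : Measurable r) (hr_nonneg : ∀ x, 0 ≤ r x)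
    (hr_bdd : ∃ B : ℝ, ∀ x, r x ≤ B)
    (hr_prob : ∫ x, r x = 1)
    (E : ℝ) (f : ℝ → ℝ) (hf : MemLp f 2 volume) :
    MemLp (T1 r E f) 2 volume ∧
      eLpNorm (T1 r E f) 2 volume ≤ eLpNorm f 2 volume := by
  obtain ⟨g, hg_sm, hfg⟩ := hf.1
  have hg_meas : Measurable g := hg_sm.measurable
  have hgmem : MemLp g 2 volume := hf.ae_eq hfg
  have hTeq : T1 r E f = T1 r E g := by
    funext x
    exact integral_congr_ae (by filter_upwards [hfg] with y hy; rw [hy])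
  have h := T1Aux.aux r hr_meas hr_nonneg hr_prob E g hg_meas hgmem
  rw [hTeq]
  exact ⟨h.1, h.2.trans_eq (eLpNorm_congr_ae hfg.symm)⟩
end
end
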